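/- arXiv:1405.2571 — 7 statements merged into one kernel-verified Lean document; each statement's English description precedes it below -/
import Mathlib

section
/- Let S be a maximal independent set of G_L and x ∈ S. Define ν(x) as the number of directions d ∈ {1,2,3} such that the grid line ℓ_{x,d} contains a node u ∈ V_L \ S with N(u) ∩ S = {x}. Then the maximum cardinality of a set I ⊆ V_L \ S such that (S \ {x}) ∪ I is an independent set of G_L equals ν(x). -/
/-- A PLS set: any two distinct triples have Hamming distance at least 2. -/

lemma hd_one_exists {n : ℕ} {u x : Fin 3 → Fin n} (h : hammingDist u x = 1) :
    ∃ d, u d ≠ x d ∧ ∀ e, e ≠ d → u e = x e := by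
  rw [hammingDist] at h
  obtain ⟨d, hd⟩ := Finset.card_eq_one.mp h
  refine ⟨d, ?_, ?_⟩
  · have : d ∈ Finset.univ.filter fun i => u i ≠ x i := by rw [hd]; simp
    simpa using this
  · intro e he
    by_contra hne
    have : e ∈ Finset.univ.filter fun i => u i ≠ x i := by simp [hne]
    rw [hd] at this; simp at this; exact he this

lemma two_le_hd {n : ℕ} {u v : Fin 3 → Fin n} {d e : Fin 3} (hde : d ≠ e)
    (h1 : u d ≠ v d) (h2 : u e ≠ v e) : 2 ≤ hammingDist u v := by
  rw [hammingDist]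
  apply Finset.one_lt_card.mpr
  exact ⟨d, by simp [h1], e, by simp [h2], hde⟩

lemma hd_le_one {n : ℕ} {u v : Fin 3 → Fin n} {d : Fin 3}
    (h : ∀ e, e ≠ d → u e = v e) : hammingDist u v ≤ 1 := by
  rw [hammingDist]
  calc (Finset.univ.filter fun i => u i ≠ v i).card ≤ ({d} : Finset (Fin 3)).card := by
        apply Finset.card_le_card
        intro i hi
        simp only [Finset.mem_filter] at hi
        simp only [Finset.mem_singleton]
        by_contra hid
        exact hi.2 (h i hid)
    _ = 1 := Finset.card_singleton d

def IsPLS {n : ℕ} (T : Set (Fin 3 → Fin n)) : Prop :=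
  ∀ v ∈ T, ∀ w ∈ T, v ≠ w → 2 ≤ hammingDist v w

/-- The node set `V_L = [n]³ \ (L ∪ N*(L))`. -/
def VL {n : ℕ} (L : Set (Fin 3 → Fin n)) : Set (Fin 3 → Fin n) :=
  {v | v ∉ L ∧ ∀ w ∈ L, hammingDist v w ≠ 1}

/-- The graph `GraphL`: distinct nodes of `V_L` are adjacent iff their Hamming distance is 1. -/
def GraphL {n : ℕ} (L : Set (Fin 3 → Fin n)) : SimpleGraph (Fin 3 → Fin n) where
  Adj v w := v ∈ VL L ∧ w ∈ VL L ∧ hammingDist v w = 1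
  symm := by
    constructor
    rintro v w ⟨hv, hw, h⟩
    exact ⟨hw, hv, by rwa [hammingDist_comm]⟩
  loopless := by
    constructor
    rintro v ⟨_, _, h⟩
    simp [hammingDist_self] at h

/-- An independent set of a simple graph. -/
def IsIndep {V : Type*} (G : SimpleGraph V) (S : Set V) : Prop :=
  ∀ v ∈ S, ∀ w ∈ S, ¬ G.Adj v w

/-- The grid line `ℓ_{v,d}`: all triples agreeing with `v` in both coordinates other than `d`. -/
def gridLine {n : ℕ} (v : Fin 3 → Fin n) (d : Fin 3) : Set (Fin 3 → Fin n) :=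
  {w | ∀ e, e ≠ d → w e = v e}

/-- for a maximal independent set `S` of `G_L` and `x ∈ S`, the maximum
cardinality of a set `I ⊆ V_L \ S` such that `(S \ {x}) ∪ I` is independent equals
`ν(x)`, the number of directions `d` whose grid line `ℓ_{x,d}` contains a node
`u ∈ V_L \ S` with `N(u) ∩ S = {x}`. -/
theorem one_swap_max_insertion (n : ℕ) (hn : 2 ≤ n)
    (L : Set (Fin 3 → Fin n)) (hL : IsPLS L)
    (S : Set (Fin 3 → Fin n)) (hsub : S ⊆ VL L) (hind : IsIndep (GraphL L) S)
    (hmax : ∀ v ∈ VL L \ S, ((GraphL L).neighborSet v ∩ S).Nonempty)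
    (x : Fin 3 → Fin n) (hx : x ∈ S) :
    IsGreatest
      {k : ℕ | ∃ I ⊆ VL L \ S, IsIndep (GraphL L) ((S \ {x}) ∪ I) ∧ I.ncard = k}
      ({d : Fin 3 | ∃ u ∈ gridLine x d,
        u ∈ VL L \ S ∧ (GraphL L).neighborSet u ∩ S = {x}}.ncard) := by
  classical
  set D := {d : Fin 3 | ∃ u ∈ gridLine x d,
      u ∈ VL L \ S ∧ (GraphL L).neighborSet u ∩ S = {x}} with hDdef
  constructor
  · -- membership: construct I of cardinality D.ncard
    have hch : ∀ d ∈ D, ∃ u, u ∈ gridLine x d ∧ u ∈ VL L \ S ∧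
        (GraphL L).neighborSet u ∩ S = {x} := by
      intro d hd
      obtain ⟨u, hu1, hu2, hu3⟩ := hd
      exact ⟨u, hu1, hu2, hu3⟩
    haveI : Inhabited (Fin 3 → Fin n) := ⟨x⟩
    choose! f hf1 hf2 hf3 using hch
    have hne : ∀ d ∈ D, f d d ≠ x d := by
      intro d hd heq
      have hfx : f d = x := by
        funext e
        by_cases he : e = d
        · rw [he]; exact heq
        · exact hf1 d hd e he
      exact (hf2 d hd).2 (hfx ▸ hx)
    have hinj : Set.InjOn f D := by
      intro d hd e he hfe
      by_contra hde
      have h1 : f d d ≠ x d := hne d hd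
      have h2 : f e d = x d := hf1 e he d hde
      rw [hfe] at h1
      exact h1 h2
    refine ⟨f '' D, ?_, ?_, Set.ncard_image_of_injOn hinj⟩
    · rintro u ⟨d, hd, rfl⟩
      exact hf2 d hd
    · rintro v hv w hw hadj
      rcases hv with hv | ⟨d, hd, rfl⟩
      · rcases hw with hw | ⟨e, he, rfl⟩
        · exact hind v hv.1 w hw.1 hadj
        · have : v ∈ (GraphL L).neighborSet (f e) ∩ S := ⟨hadj.symm, hv.1⟩
          rw [hf3 e he] at this
          exact hv.2 this
      · rcases hw with hw | ⟨e, he, rfl⟩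
        · have : w ∈ (GraphL L).neighborSet (f d) ∩ S := ⟨hadj, hw.1⟩
          rw [hf3 d hd] at this
          exact hw.2 this
        · by_cases hde : d = e
          · subst hde
            exact hadj.ne rfl
          · have hvd : f d d ≠ f e d := by
              have := hf1 e he d hde
              rw [this]; exact hne d hd
            have hve : f d e ≠ f e e := by
              have h1 : f d e = x e := hf1 d hd e (fun h => hde h.symm)
              rw [h1]; exact fun h => hne e he h.symm
            have := two_le_hd hde hvd hve
            rw [hadj.2.2] at this
            omega
  · -- upper bound
    rintro k ⟨I, hIsub, hIind, rfl⟩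
    have hkey : ∀ u ∈ I, ∃ d, u d ≠ x d ∧ (∀ e, e ≠ d → u e = x e) ∧ d ∈ D := by
      intro u hu
      have huVS := hIsub hu
      have hns : (GraphL L).neighborSet u ∩ S = {x} := by
        have hsub' : ∀ y ∈ (GraphL L).neighborSet u ∩ S, y = x := by
          rintro y ⟨hy1, hy2⟩
          by_contra hyx
          exact hIind u (Or.inr hu) y (Or.inl ⟨hy2, hyx⟩) hy1
        obtain ⟨s, hs⟩ := hmax u huVS
        have hsx := hsub' s hs
        rw [Set.eq_singleton_iff_unique_mem]
        exact ⟨hsx ▸ hs, hsub'⟩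
      have hxN : x ∈ (GraphL L).neighborSet u := by
        have : x ∈ (GraphL L).neighborSet u ∩ S := by rw [hns]; rfl
        exact this.1
      have hd1 : hammingDist u x = 1 := hxN.2.2
      obtain ⟨d, hd1, hd2⟩ := hd_one_exists hd1
      exact ⟨d, hd1, hd2, ⟨u, hd2, huVS, hns⟩⟩
    choose! g hg1 hg2 hg3 using hkey
    have hginj : Set.InjOn g I := by
      intro u hu v hv hguv
      by_contra huv
      have hadj : (GraphL L).Adj u v := by
        refine ⟨(hIsub hu).1, (hIsub hv).1, ?_⟩
        have hle : hammingDist u v ≤ 1 := by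
          apply hd_le_one (d := g u)
          intro e he
          rw [hg2 u hu e he, ← hg2 v hv e (hguv ▸ he)]
        have hpos : 0 < hammingDist u v := hammingDist_pos.mpr huv
        omega
      exact hIind u (Or.inr hu) v (Or.inr hv) hadj
    exact Set.ncard_le_ncard_of_injOn g (fun u hu => hg3 u hu) hginj (Set.toFinite D)
end

section
/- Let S be a maximal independent set of G_L. There exist x ∈ S and a set I ⊆ V_L \ S with |I| ≥ 2 such that (S \ {x}) ∪ I is independent (i.e., the (1,n²)-neighborhood of S contains an improved solution) if and only if there exist x ∈ S and two non-adjacent nodes u, v ∈ V_L \ S with N(u) ∩ S = N(v) ∩ S = {x}. -/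
/-- for a maximal independent set `S` of `G_L`, the `(1,n²)`-neighborhood
of `S` contains an improved solution iff there exist `x ∈ S` and two distinct
non-adjacent nodes `u, v ∈ V_L \ S` with `N(u) ∩ S = N(v) ∩ S = {x}`. -/
theorem one_swap_improvement_iff (n : ℕ) (hn : 2 ≤ n)
    (L : Set (Fin 3 → Fin n)) (hL : IsPLS L)
    (S : Set (Fin 3 → Fin n)) (hsub : S ⊆ VL L) (hind : IsIndep (GraphL L) S)
    (hmax : ∀ v ∈ VL L \ S, ((GraphL L).neighborSet v ∩ S).Nonempty) :
    (∃ x ∈ S, ∃ I ⊆ VL L \ S, 2 ≤ I.ncard ∧ IsIndep (GraphL L) ((S \ {x}) ∪ I)) ↔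
    (∃ x ∈ S, ∃ u ∈ VL L \ S, ∃ v ∈ VL L \ S, u ≠ v ∧ ¬ (GraphL L).Adj u v ∧
      (GraphL L).neighborSet u ∩ S = {x} ∧ (GraphL L).neighborSet v ∩ S = {x}) := by
  constructor
  · rintro ⟨x, hx, I, hIsub, hI2, hindI⟩
    -- I is finite and has two distinct elements
    have hfin : I.Finite := by
      by_contra h
      rw [Set.Infinite.ncard (by simpa using h)] at hI2
      omega
    obtain ⟨u, v, hu, hv, huv⟩ := (Set.one_lt_ncard_iff hfin).mp (by omega)
    have key : ∀ w ∈ I, (GraphL L).neighborSet w ∩ S = {x} := by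
      intro w hw
      have hwVS := hIsub hw
      obtain ⟨s, hs⟩ := hmax w hwVS
      apply Set.eq_singleton_iff_nonempty_unique_mem.mpr
      constructor
      · exact ⟨s, hs⟩
      · intro y hy
        by_contra hyx
        have hyS : y ∈ S := hy.2
        have hadj : (GraphL L).Adj w y := hy.1
        exact hindI w (Or.inr hw) y (Or.inl ⟨hyS, hyx⟩) hadj
    have hx' : ∀ w ∈ I, (GraphL L).neighborSet w ∩ S = {x} := key
    refine ⟨x, hx, u, hIsub hu, v, hIsub hv, huv, ?_, hx' u hu, hx' v hv⟩
    exact hindI u (Or.inr hu) v (Or.inr hv)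
  · rintro ⟨x, hx, u, hu, v, hv, huv, hadjuv, hNu, hNv⟩
    refine ⟨x, hx, {u, v}, ?_, ?_, ?_⟩
    · intro w hw; rcases hw with h | h <;> subst h <;> assumption
    · rw [Set.ncard_pair huv]
    · intro a ha b hb hab
      have notadjS : ∀ s ∈ S \ {x}, ∀ w, (GraphL L).neighborSet w ∩ S = {x} →
          ¬ (GraphL L).Adj s w := by
        intro s hs w hN hadj
        have : s ∈ (GraphL L).neighborSet w ∩ S := ⟨hadj.symm, hs.1⟩
        rw [hN] at this
        exact hs.2 this
      have getN : ∀ w, w ∈ ({u, v} : Set (Fin 3 → Fin n)) →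
          (GraphL L).neighborSet w ∩ S = {x} := by
        intro w hw
        rcases hw with h | h <;> rw [h] <;> assumption
      rcases ha with ha | ha <;> rcases hb with hb | hb
      · exact hind a ha.1 b hb.1 hab
      · exact notadjS a ha b (getN b hb) hab
      · exact notadjS b hb a (getN a ha) hab.symm
      · rcases ha with ha | ha <;> rcases hb with hb | hb
        · exact hab.ne (ha.trans hb.symm)
        · rw [ha, hb] at hab; exact hadjuv hab
        · rw [ha, hb] at hab; exact hadjuv hab.symm
        · exact hab.ne (ha.trans hb.symm)
end

section
/- Let S be an independent set of G_L and let u ∈ V_L \ S be a 2-tight node with N(u) ∩ S = {x, y}, x ≠ y, where x differs from u exactly in coordinate d_x and y differs from u exactly in coordinate d_y (necessarily d_x ≠ d_y). Then every node v ∈ V_L \ (S ∪ {u}) that has no neighbor in (S ∪ {u}) \ {x, y} satisfies N(v) ∩ S ⊆ {x, y}; moreover at most one such v satisfies |N(v) ∩ S| = 2, and if it exists it is the triple w determined by w_{d_x} = x_{d_x}, w_{d_y} = y_{d_y}, and w agreeing with u in the remaining coordinate. -/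
lemma dist_one_aux {n : ℕ} {v w : Fin 3 → Fin n} (h : hammingDist v w = 1)
    {i j : Fin 3} (hij : i ≠ j) (hi : v i ≠ w i) : v j = w j := by
  by_contra hj
  have hsub : ({i, j} : Finset (Fin 3)) ⊆ Finset.univ.filter (fun k => v k ≠ w k) := by
    intro k hk
    simp only [Finset.mem_insert, Finset.mem_singleton] at hk
    rcases hk with rfl | rfl <;> simp [hi, hj]
  have hcard := Finset.card_le_card hsub
  rw [Finset.card_pair hij] at hcard
  unfold hammingDist at h
  omega

/-- let `u` be a 2-tight node with `N(u) ∩ S = {x, y}`, where `x`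
differs from `u` exactly in coordinate `dx` and `y` exactly in `dy ≠ dx`. Then every
node `v ∈ V_L \ (S ∪ {u})` with no neighbor in `(S ∪ {u}) \ {x, y}` satisfies
`N(v) ∩ S ⊆ {x, y}`; moreover any such `v` with `|N(v) ∩ S| = 2` is the uniquely
determined triple with `v dx = x dx`, `v dy = y dy`, agreeing with `u` elsewhere. -/
theorem two_swap_free_nodes (n : ℕ) (hn : 2 ≤ n)
    (L : Set (Fin 3 → Fin n)) (hL : IsPLS L)
    (S : Set (Fin 3 → Fin n)) (hsub : S ⊆ VL L) (hind : IsIndep (GraphL L) S)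
    (u : Fin 3 → Fin n) (hu : u ∈ VL L \ S)
    (x y : Fin 3 → Fin n) (hxy : x ≠ y)
    (hN : (GraphL L).neighborSet u ∩ S = {x, y})
    (dx dy : Fin 3) (hd : dx ≠ dy)
    (hxd : x dx ≠ u dx) (hxe : ∀ e, e ≠ dx → x e = u e)
    (hyd : y dy ≠ u dy) (hye : ∀ e, e ≠ dy → y e = u e) :
    (∀ v, v ∈ VL L \ (S ∪ {u}) → (∀ z ∈ (S ∪ {u}) \ {x, y}, ¬ (GraphL L).Adj v z) →
      (GraphL L).neighborSet v ∩ S ⊆ {x, y}) ∧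
    (∀ v, v ∈ VL L \ (S ∪ {u}) → (∀ z ∈ (S ∪ {u}) \ {x, y}, ¬ (GraphL L).Adj v z) →
      ((GraphL L).neighborSet v ∩ S).ncard = 2 →
      (v dx = x dx ∧ v dy = y dy ∧ ∀ e, e ≠ dx → e ≠ dy → v e = u e)) := by

  have part1 : ∀ v, v ∈ VL L \ (S ∪ {u}) → (∀ z ∈ (S ∪ {u}) \ {x, y}, ¬ (GraphL L).Adj v z) →
      (GraphL L).neighborSet v ∩ S ⊆ {x, y} := by
    rintro v hv hno z ⟨hadj, hzS⟩
    by_contra hzxy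
    exact hno z ⟨Or.inl hzS, hzxy⟩ hadj
  refine ⟨part1, ?_⟩
  intro v hv hno hcard
  have hvu : v ≠ u := by
    intro hvu; exact hv.2 (Or.inr (by simp [hvu]))
  have heq : (GraphL L).neighborSet v ∩ S = {x, y} := by
    apply Set.eq_of_subset_of_ncard_le (part1 v hv hno)
    rw [hcard, Set.ncard_pair hxy]
  have hx : x ∈ (GraphL L).neighborSet v ∩ S := by rw [heq]; exact Or.inl rfl
  have hy : y ∈ (GraphL L).neighborSet v ∩ S := by rw [heq]; exact Or.inr rfl
  have hvx : hammingDist v x = 1 := hx.1.2.2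
  have hvy : hammingDist v y = 1 := hy.1.2.2
  obtain ⟨e0, he0x, he0y, he0⟩ : ∃ e0, e0 ≠ dx ∧ e0 ≠ dy ∧
      ∀ e : Fin 3, e ≠ dx → e ≠ dy → e = e0 := by
    have key : ∀ a b : Fin 3, a ≠ b → ∃ c, c ≠ a ∧ c ≠ b ∧
        ∀ e : Fin 3, e ≠ a → e ≠ b → e = c := by decide
    exact key dx dy hd
  have hydx : y dx = u dx := hye dx hd
  have hxdy : x dy = u dy := hxe dy (Ne.symm hd)
  have hxe0 : x e0 = u e0 := hxe e0 he0x
  have hye0 : y e0 = u e0 := hye e0 he0y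
  -- Step A : v e0 = u e0
  have hA : v e0 = u e0 := by
    by_contra hne
    have h1 : v e0 ≠ x e0 := by rw [hxe0]; exact hne
    have h2 : v e0 ≠ y e0 := by rw [hye0]; exact hne
    have h3 : v dy = x dy := dist_one_aux hvx he0y h1
    have h4 : v dy = y dy := dist_one_aux hvy he0y h2
    rw [hxdy] at h3
    exact hyd (h4 ▸ h3 ▸ rfl)
  by_cases hvdx : v dx = x dx
  · have hvydx : v dx ≠ y dx := by rw [hvdx, hydx]; exact hxd
    have : v dy = y dy := dist_one_aux hvy hd hvydx
    refine ⟨hvdx, this, fun e h1 h2 => ?_⟩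
    rw [he0 e h1 h2]; exact hA
  · exfalso
    have h3 : v dy = x dy := dist_one_aux hvx hd hvdx
    rw [hxdy] at h3
    by_cases hvu2 : v dx = u dx
    · apply hvu
      funext e
      rcases eq_or_ne e dx with rfl | h1
      · exact hvu2
      rcases eq_or_ne e dy with rfl | h2
      · exact h3
      · rw [he0 e h1 h2]; exact hA
    · have hvydx : v dx ≠ y dx := by rw [hydx]; exact hvu2
      have : v dy = y dy := dist_one_aux hvy hd hvydx
      exact hyd (this ▸ h3 ▸ rfl)
end

section
/- Let S be an independent set of G_L and let u ∈ V_L \ S be a 3-tight node with N(u) ∩ S = {x, y, z} (so x, y, z differ from u in three pairwise distinct coordinates). Then every node v ∈ V_L \ (S ∪ {u}) that has no neighbor in (S ∪ {u}) \ {x, y, z} satisfies N(v) ∩ S ⊆ {x, y, z} and |N(v) ∩ S| ≤ 2; moreover at most three such v satisfy |N(v) ∩ S| = 2, one candidate for each of the three pairs from {x, y, z}. -/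
lemma dist_one_iff {n : ℕ} (v w : Fin 3 → Fin n) :
    hammingDist v w = 1 ↔ ∃ d, v d ≠ w d ∧ ∀ e, e ≠ d → v e = w e := by
  rw [hammingDist, Finset.card_eq_one]
  constructor
  · rintro ⟨d, hd⟩
    refine ⟨d, ?_, ?_⟩
    · have : d ∈ Finset.univ.filter fun i => v i ≠ w i := hd ▸ Finset.mem_singleton_self d
      simpa using this
    · intro e he
      by_contra h
      have : e ∈ Finset.univ.filter fun i => v i ≠ w i := by simpa using h
      rw [hd, Finset.mem_singleton] at this
      exact he this
  · rintro ⟨d, hd, h⟩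
    refine ⟨d, ?_⟩
    ext e
    simp only [Finset.mem_filter, Finset.mem_univ, true_and, Finset.mem_singleton]
    constructor
    · intro he; by_contra hed; exact he (h e hed)
    · rintro rfl; exact hd

lemma key_struct {n : ℕ} (u x v : Fin 3 → Fin n) (d : Fin 3)
    (hx : ∀ e, e ≠ d → x e = u e)
    (hvu : v ≠ u) (hvu1 : hammingDist v u ≠ 1)
    (hvx : hammingDist v x = 1) :
    v d = x d ∧ ∃ c, c ≠ d ∧ v c ≠ u c ∧ ∀ e, e ≠ d → e ≠ c → v e = u e := by
  obtain ⟨c, hc, hcall⟩ := (dist_one_iff v x).1 hvx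
  by_cases hcd : c = d
  · subst hcd
    have hvue : ∀ e, e ≠ c → v e = u e := fun e he => (hcall e he).trans (hx e he)
    exfalso
    apply hvu1
    rw [dist_one_iff]
    refine ⟨c, ?_, hvue⟩
    intro h
    apply hvu
    funext e
    by_cases he : e = c
    · subst he; exact h
    · exact hvue e he
  · refine ⟨hcall d (fun h => hcd h.symm), c, hcd, ?_, ?_⟩
    · rw [hx c hcd] at hc; exact hc
    · intro e hed hec
      exact (hcall e hec).trans (hx e hed)

lemma determine {n : ℕ} (u a b v : Fin 3 → Fin n) (da db : Fin 3) (hdab : da ≠ db)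
    (ha : ∀ e, e ≠ da → a e = u e)
    (hb : ∀ e, e ≠ db → b e = u e) (hbd : b db ≠ u db)
    (hvu : v ≠ u) (hvu1 : hammingDist v u ≠ 1)
    (hva : hammingDist v a = 1) (hvb : hammingDist v b = 1) :
    v = fun e => if e = da then a da else if e = db then b db else u e := by
  obtain ⟨h1, c, hc, hcu, hcall⟩ := key_struct u a v da ha hvu hvu1 hva
  obtain ⟨h2, -⟩ := key_struct u b v db hb hvu hvu1 hvb
  have hcdb : c = db := by
    by_contra h
    have := hcall db (fun hh => hdab hh.symm) (fun hh => h hh.symm)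
    rw [h2] at this
    exact hbd this
  subst hcdb
  funext e
  by_cases h1e : e = da
  · subst h1e; simp [h1]
  · by_cases h2e : e = c
    · subst h2e; simp [h1e, h2, hc]
    · simp only [if_neg h1e, if_neg h2e]
      exact hcall e h1e h2e



/-- let `u` be a 3-tight node with `N(u) ∩ S = {x, y, z}`. Then every
node `v ∈ V_L \ (S ∪ {u})` with no neighbor in `(S ∪ {u}) \ {x, y, z}` satisfies
`N(v) ∩ S ⊆ {x, y, z}` and `|N(v) ∩ S| ≤ 2`; moreover at most three such nodes have
`|N(v) ∩ S| = 2`: at most one candidate for each of the three pairs from `{x,y,z}`. -/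
theorem three_swap_free_nodes (n : ℕ) (hn : 2 ≤ n)
    (L : Set (Fin 3 → Fin n)) (hL : IsPLS L)
    (S : Set (Fin 3 → Fin n)) (hsub : S ⊆ VL L) (hind : IsIndep (GraphL L) S)
    (u : Fin 3 → Fin n) (hu : u ∈ VL L \ S)
    (x y z : Fin 3 → Fin n) (hxy : x ≠ y) (hyz : y ≠ z) (hxz : x ≠ z)
    (hN : (GraphL L).neighborSet u ∩ S = {x, y, z}) :
    (∀ v, v ∈ VL L \ (S ∪ {u}) → (∀ a ∈ (S ∪ {u}) \ {x, y, z}, ¬ (GraphL L).Adj v a) →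
      (GraphL L).neighborSet v ∩ S ⊆ {x, y, z} ∧
      ((GraphL L).neighborSet v ∩ S).ncard ≤ 2) ∧
    (∀ v v', v ∈ VL L \ (S ∪ {u}) → (∀ a ∈ (S ∪ {u}) \ {x, y, z}, ¬ (GraphL L).Adj v a) →
      v' ∈ VL L \ (S ∪ {u}) → (∀ a ∈ (S ∪ {u}) \ {x, y, z}, ¬ (GraphL L).Adj v' a) →
      ((GraphL L).neighborSet v ∩ S).ncard = 2 →
      (GraphL L).neighborSet v ∩ S = (GraphL L).neighborSet v' ∩ S → v = v') := by
  -- basic membership facts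
  have hxm : x ∈ (GraphL L).neighborSet u ∩ S := by rw [hN]; left; rfl
  have hym : y ∈ (GraphL L).neighborSet u ∩ S := by rw [hN]; right; left; rfl
  have hzm : z ∈ (GraphL L).neighborSet u ∩ S := by rw [hN]; right; right; rfl
  have hxS : x ∈ S := hxm.2
  have hyS : y ∈ S := hym.2
  have hzS : z ∈ S := hzm.2
  have huS : u ∉ S := hu.2
  have huVL : u ∈ VL L := hu.1
  have hadjux : u ∈ VL L ∧ x ∈ VL L ∧ hammingDist u x = 1 := hxm.1
  have hadjuy : u ∈ VL L ∧ y ∈ VL L ∧ hammingDist u y = 1 := hym.1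
  have hadjuz : u ∈ VL L ∧ z ∈ VL L ∧ hammingDist u z = 1 := hzm.1
  obtain ⟨dx, hdx, hdxall⟩ := (dist_one_iff u x).1 hadjux.2.2
  obtain ⟨dy, hdy, hdyall⟩ := (dist_one_iff u y).1 hadjuy.2.2
  obtain ⟨dz, hdz, hdzall⟩ := (dist_one_iff u z).1 hadjuz.2.2
  have hx : ∀ e, e ≠ dx → x e = u e := fun e he => (hdxall e he).symm
  have hy : ∀ e, e ≠ dy → y e = u e := fun e he => (hdyall e he).symm
  have hz : ∀ e, e ≠ dz → z e = u e := fun e he => (hdzall e he).symm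
  have hxd : x dx ≠ u dx := fun h => hdx h.symm
  have hyd : y dy ≠ u dy := fun h => hdy h.symm
  have hzd : z dz ≠ u dz := fun h => hdz h.symm
  -- distinct coordinates
  have hdistinct : ∀ (a b : Fin 3 → Fin n) (da db : Fin 3), a ∈ S → b ∈ S → a ≠ b →
      (∀ e, e ≠ da → a e = u e) → (∀ e, e ≠ db → b e = u e) → da ≠ db := by
    intro a b da db haS hbS hab ha hb h
    subst h
    have hab1 : hammingDist a b = 1 := by
      rw [dist_one_iff]
      refine ⟨da, ?_, fun e he => (ha e he).trans (hb e he).symm⟩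
      intro hh
      apply hab
      funext e
      by_cases he : e = da
      · subst he; exact hh
      · exact (ha e he).trans (hb e he).symm
    exact hind a haS b hbS ⟨hsub haS, hsub hbS, hab1⟩
  have hdxy : dx ≠ dy := hdistinct x y dx dy hxS hyS hxy hx hy
  have hdyz : dy ≠ dz := hdistinct y z dy dz hyS hzS hyz hy hz
  have hdxz : dx ≠ dz := hdistinct x z dx dz hxS hzS hxz hx hz
  -- u is not x, y, or z
  have hunot : u ∉ ({x, y, z} : Set (Fin 3 → Fin n)) := by
    intro h
    rcases h with h | h | h
    · exact huS (h ▸ hxS)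
    · exact huS (h ▸ hyS)
    · exact huS (h ▸ hzS)
  -- common facts for qualifying v
  have hvfacts : ∀ v, v ∈ VL L \ (S ∪ {u}) →
      (∀ a ∈ (S ∪ {u}) \ {x, y, z}, ¬ (GraphL L).Adj v a) →
      v ≠ u ∧ hammingDist v u ≠ 1 ∧ (GraphL L).neighborSet v ∩ S ⊆ {x, y, z} := by
    intro v hv hfree
    have hvne : v ≠ u := fun h => hv.2 (Or.inr h)
    have hvu1 : hammingDist v u ≠ 1 := by
      intro h
      exact hfree u ⟨Or.inr rfl, hunot⟩ ⟨hv.1, huVL, h⟩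
    refine ⟨hvne, hvu1, ?_⟩
    intro a ha
    by_contra hnot
    exact hfree a ⟨Or.inl ha.2, hnot⟩ ha.1
  -- can't be adjacent to all three
  have hnot3 : ∀ v, v ≠ u → hammingDist v u ≠ 1 →
      ¬(hammingDist v x = 1 ∧ hammingDist v y = 1 ∧ hammingDist v z = 1) := by
    rintro v hvne hvu1 ⟨h1, h2, h3⟩
    have hdet := determine u x y v dx dy hdxy hx hy hyd hvne hvu1 h1 h2
    have hvz : v dz = z dz := (key_struct u z v dz hz hvne hvu1 h3).1
    rw [hdet] at hvz
    simp only [if_neg (Ne.symm hdxz), if_neg (Ne.symm hdyz)] at hvz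
    exact hzd hvz.symm
  constructor
  · intro v hv hfree
    obtain ⟨hvne, hvu1, hsub3⟩ := hvfacts v hv hfree
    refine ⟨hsub3, ?_⟩
    set A := (GraphL L).neighborSet v ∩ S with hA
    have hmemadj : ∀ a, a ∈ A → hammingDist v a = 1 := by
      intro a ha
      exact ((ha.1 : (GraphL L).Adj v a) : v ∈ VL L ∧ a ∈ VL L ∧ hammingDist v a = 1).2.2
    have : x ∉ A ∨ y ∉ A ∨ z ∉ A := by
      by_contra h
      push_neg at h
      exact hnot3 v hvne hvu1 ⟨hmemadj x h.1, hmemadj y h.2.1, hmemadj z h.2.2⟩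
    rcases this with h | h | h
    · have hss : A ⊆ {y, z} := by
        intro a ha
        rcases hsub3 ha with h1 | h1 | h1
        · exact absurd (h1 ▸ ha) h
        · exact Or.inl h1
        · exact Or.inr h1
      calc A.ncard ≤ ({y, z} : Set (Fin 3 → Fin n)).ncard :=
            Set.ncard_le_ncard hss (Set.toFinite _)
        _ = 2 := Set.ncard_pair hyz
    · have hss : A ⊆ {x, z} := by
        intro a ha
        rcases hsub3 ha with h1 | h1 | h1
        · exact Or.inl h1
        · exact absurd (h1 ▸ ha) h
        · exact Or.inr h1
      calc A.ncard ≤ ({x, z} : Set (Fin 3 → Fin n)).ncard :=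
            Set.ncard_le_ncard hss (Set.toFinite _)
        _ = 2 := Set.ncard_pair hxz
    · have hss : A ⊆ {x, y} := by
        intro a ha
        rcases hsub3 ha with h1 | h1 | h1
        · exact Or.inl h1
        · exact Or.inr h1
        · exact absurd (h1 ▸ ha) h
      calc A.ncard ≤ ({x, y} : Set (Fin 3 → Fin n)).ncard :=
            Set.ncard_le_ncard hss (Set.toFinite _)
        _ = 2 := Set.ncard_pair hxy
  · intro v v' hv hfree hv' hfree' h2 heq
    obtain ⟨hvne, hvu1, hsub3⟩ := hvfacts v hv hfree
    obtain ⟨hvne', hvu1', _⟩ := hvfacts v' hv' hfree'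
    obtain ⟨a, b, hab, hAab⟩ := Set.ncard_eq_two.1 h2
    have haA : a ∈ (GraphL L).neighborSet v ∩ S := by rw [hAab]; left; rfl
    have hbA : b ∈ (GraphL L).neighborSet v ∩ S := by rw [hAab]; right; rfl
    have haA' : a ∈ (GraphL L).neighborSet v' ∩ S := heq ▸ haA
    have hbA' : b ∈ (GraphL L).neighborSet v' ∩ S := heq ▸ hbA
    have hva : hammingDist v a = 1 :=
      ((haA.1 : (GraphL L).Adj v a) : v ∈ VL L ∧ a ∈ VL L ∧ hammingDist v a = 1).2.2
    have hvb : hammingDist v b = 1 :=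
      ((hbA.1 : (GraphL L).Adj v b) : v ∈ VL L ∧ b ∈ VL L ∧ hammingDist v b = 1).2.2
    have hva' : hammingDist v' a = 1 :=
      ((haA'.1 : (GraphL L).Adj v' a) : v' ∈ VL L ∧ a ∈ VL L ∧ hammingDist v' a = 1).2.2
    have hvb' : hammingDist v' b = 1 :=
      ((hbA'.1 : (GraphL L).Adj v' b) : v' ∈ VL L ∧ b ∈ VL L ∧ hammingDist v' b = 1).2.2
    have finish : ∀ (p q : Fin 3 → Fin n) (dp dq : Fin 3), dp ≠ dq →
        (∀ e, e ≠ dp → p e = u e) → (∀ e, e ≠ dq → q e = u e) → q dq ≠ u dq →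
        hammingDist v p = 1 → hammingDist v q = 1 →
        hammingDist v' p = 1 → hammingDist v' q = 1 → v = v' := by
      intro p q dp dq hdpq hp hq hqd h1 h2' h3 h4
      rw [determine u p q v dp dq hdpq hp hq hqd hvne hvu1 h1 h2',
        determine u p q v' dp dq hdpq hp hq hqd hvne' hvu1' h3 h4]
    rcases hsub3 haA with ha1 | ha1 | ha1 <;> rcases hsub3 hbA with hb1 | hb1 | hb1 <;>
      rw [ha1] at hva hva' <;> rw [hb1] at hvb hvb'
    · exact absurd (ha1.trans hb1.symm) hab
    · exact finish x y dx dy hdxy hx hy hyd hva hvb hva' hvb'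
    · exact finish x z dx dz hdxz hx hz hzd hva hvb hva' hvb'
    · exact finish x y dx dy hdxy hx hy hyd hvb hva hvb' hva'
    · exact absurd (ha1.trans hb1.symm) hab
    · exact finish y z dy dz hdyz hy hz hzd hva hvb hva' hvb'
    · exact finish x z dx dz hdxz hx hz hzd hvb hva hvb' hva'
    · exact finish y z dy dz hdyz hy hz hzd hvb hva hvb' hva'
    · exact absurd (ha1.trans hb1.symm) hab
end

section
/- (Theorem 5, part 2) Let L ⊆ [n]³ be a PLS set and let S be an independent set of G_L that is (p,n²)-maximal for every p ∈ {0, 1, 2}. Then S is a 5/9-approximate solution of the PLSE instance L: for every independent set S* of G_L, 9·|S| ≥ 5·|S*|. -/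
namespace TwoMaxAux

lemma graphL_adj {n : ℕ} {L : Set (Fin 3 → Fin n)} {u v : Fin 3 → Fin n}
    (h : (GraphL L).Adj u v) : u ∈ VL L ∧ v ∈ VL L ∧ hammingDist u v = 1 := h

lemma ham_unique {n : ℕ} {u v : Fin 3 → Fin n} (h : hammingDist u v = 1) {d e : Fin 3}
    (hd : u d ≠ v d) (hed : e ≠ d) : u e = v e := by
  by_contra he
  have hsub : ({d, e} : Finset (Fin 3)) ⊆ (Finset.univ.filter fun i => u i ≠ v i) := by
    intro x hx
    simp only [Finset.mem_insert, Finset.mem_singleton] at hx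
    rcases hx with rfl | rfl <;> simp [hd, he]
  have hle := Finset.card_le_card hsub
  rw [Finset.card_pair (Ne.symm hed)] at hle
  have : hammingDist u v = (Finset.univ.filter fun i => u i ≠ v i).card := rfl
  omega

lemma ham_one {n : ℕ} {u v : Fin 3 → Fin n} {d : Fin 3}
    (hd : u d ≠ v d) (he : ∀ e, e ≠ d → u e = v e) : hammingDist u v = 1 := by
  have hfil : (Finset.univ.filter fun i => u i ≠ v i) = {d} := by
    ext e
    simp only [Finset.mem_filter, Finset.mem_univ, true_and, Finset.mem_singleton]
    constructor
    · intro h; by_contra hne; exact h (he e hne)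
    · rintro rfl; exact hd
  have : hammingDist u v = (Finset.univ.filter fun i => u i ≠ v i).card := rfl
  rw [this, hfil, Finset.card_singleton]

lemma ham_exists {n : ℕ} {u v : Fin 3 → Fin n} (h : hammingDist u v = 1) :
    ∃ d, u d ≠ v d := by
  have hne : u ≠ v := by
    intro h'; rw [h', hammingDist_self] at h; omega
  by_contra hc
  push_neg at hc
  exact hne (funext hc)

lemma adj_of_common {n : ℕ} {L : Set (Fin 3 → Fin n)} {u v w : Fin 3 → Fin n} {d : Fin 3}
    (hv : (GraphL L).Adj u v) (hw : (GraphL L).Adj u w)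
    (hvd : u d ≠ v d) (hwd : u d ≠ w d) (hne : v ≠ w) : (GraphL L).Adj v w := by
  obtain ⟨-, hvV, hv1⟩ := graphL_adj hv
  obtain ⟨-, hwV, hw1⟩ := graphL_adj hw
  refine ⟨hvV, hwV, ?_⟩
  have hvw : v d ≠ w d := by
    intro hdd
    apply hne; funext e
    by_cases hed : e = d
    · rw [hed, hdd]
    · rw [← ham_unique hv1 hvd hed, ham_unique hw1 hwd hed]
  exact ham_one hvw (fun e hed => by
    rw [← ham_unique hv1 hvd hed, ham_unique hw1 hwd hed])

lemma card_nbhd_le_three {n : ℕ} {L W : Set (Fin 3 → Fin n)} (hW : IsIndep (GraphL L) W)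
    (u : Fin 3 → Fin n) (F : Finset (Fin 3 → Fin n))
    (hF : ∀ v ∈ F, v ∈ W ∧ (GraphL L).Adj u v) : F.card ≤ 3 := by
  classical
  set f : (Fin 3 → Fin n) → Fin 3 :=
    fun v => if h : ∃ d, u d ≠ v d then h.choose else (0 : Fin 3) with hf
  have hfd : ∀ v ∈ F, u (f v) ≠ v (f v) := by
    intro v hv
    have h : ∃ d, u d ≠ v d := ham_exists (graphL_adj (hF v hv).2).2.2
    simp only [hf, dif_pos h]
    exact h.choose_spec
  have hinj : Set.InjOn f F := by
    intro v hv w hw hfvw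
    by_contra hne
    have hadj := adj_of_common (hF v hv).2 (hF w hw).2 (hfd v hv)
      (by rw [hfvw]; exact hfd w hw) hne
    exact hW v (hF v hv).1 w (hF w hw).1 hadj
  calc F.card ≤ (Finset.univ : Finset (Fin 3)).card :=
        Finset.card_le_card_of_injOn f (fun a _ => Finset.mem_univ _) hinj
    _ = 3 := by simp

end TwoMaxAux

open TwoMaxAux

/-- Theorem 5, part 2: a 2-maximal solution (i.e. `(p,n²)`-maximal for
every `p ∈ {0,1,2}`) is a 5/9-approximate solution of the PLSE instance `L`. -/
theorem two_maximal_five_ninth_approx (n : ℕ) (hn : 2 ≤ n)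
    (L : Set (Fin 3 → Fin n)) (hL : IsPLS L)
    (S : Set (Fin 3 → Fin n)) (hsub : S ⊆ VL L) (hind : IsIndep (GraphL L) S)
    (hmax : ∀ p : ℕ, p ≤ 2 → ∀ R ⊆ S, R.ncard = p → ∀ I ⊆ VL L \ S,
      IsIndep (GraphL L) ((S \ R) ∪ I) → ((S \ R) ∪ I).ncard ≤ S.ncard)
    (Sstar : Set (Fin 3 → Fin n)) (hstar : Sstar ⊆ VL L)
    (hindstar : IsIndep (GraphL L) Sstar) :
    5 * Sstar.ncard ≤ 9 * S.ncard := by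
  classical
  set G := GraphL L with hG
  -- the improvement helper (no improving swap of size ≤ 2 exists)
  have improve : ∀ R I : Set (Fin 3 → Fin n), R ⊆ S → I ⊆ VL L \ S →
      R.ncard ≤ 2 → R.ncard < I.ncard → IsIndep G ((S \ R) ∪ I) → False := by
    intro R I hRS hIV hR2 hRI hid
    have h := hmax R.ncard hR2 R hRS rfl I hIV hid
    have hdisj : Disjoint (S \ R) I := by
      rw [Set.disjoint_left]
      intro a ha haI
      exact (hIV haI).2 ha.1
    rw [Set.ncard_union_eq hdisj (Set.toFinite _) (Set.toFinite _)] at h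
    rw [Set.ncard_diff hRS (Set.toFinite _)] at h
    have hRle : R.ncard ≤ S.ncard := Set.ncard_le_ncard hRS (Set.toFinite _)
    omega
  set Ts : Set (Fin 3 → Fin n) := Sstar \ S with hTs
  set S's : Set (Fin 3 → Fin n) := S \ Sstar with hS's
  have hfinT : Ts.Finite := Set.toFinite _
  have hfinS' : S's.Finite := Set.toFinite _
  set Tf : Finset (Fin 3 → Fin n) := hfinT.toFinset with hTfdef
  set S'f : Finset (Fin 3 → Fin n) := hfinS'.toFinset with hS'fdef
  have hTsub : ∀ x ∈ Ts, x ∈ VL L \ S := fun x hx => ⟨hstar hx.1, hx.2⟩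
  have hTfmem : ∀ v : Fin 3 → Fin n, v ∈ Tf ↔ v ∈ Ts := fun v => Set.Finite.mem_toFinset hfinT
  have hS'fmem : ∀ u : Fin 3 → Fin n, u ∈ S'f ↔ u ∈ S's := fun u => Set.Finite.mem_toFinset hfinS'
  set Nb : (Fin 3 → Fin n) → Finset (Fin 3 → Fin n) := fun v => S'f.filter (fun u => G.Adj v u) with hNbdef
  have hNbmem : ∀ v u : Fin 3 → Fin n, u ∈ Nb v ↔ (u ∈ S's ∧ G.Adj v u) := by
    intro v u
    constructor
    · intro h
      obtain ⟨h1, h2⟩ := Finset.mem_filter.mp h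
      exact ⟨(hS'fmem u).mp h1, h2⟩
    · intro h
      exact Finset.mem_filter.mpr ⟨(hS'fmem u).mpr h.1, h.2⟩
  -- all S-neighbors of a vertex of T lie outside R whenever Nb v ⊆ R fails... helper:
  have hNbR : ∀ v ∈ Tf, ∀ R : Set (Fin 3 → Fin n), (↑(Nb v) : Set (Fin 3 → Fin n)) ⊆ R →
      ∀ s ∈ S, s ∉ R → ¬ G.Adj v s := by
    intro v hv R hsubR s hs hsR hadj
    have hvT : v ∈ Ts := (hTfmem v).mp hv
    have hsS' : s ∈ S's := ⟨hs, fun hst => hindstar v hvT.1 s hst hadj⟩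
    have : s ∈ Nb v := (hNbmem v s).mpr ⟨hsS', hadj⟩
    exact hsR (hsubR this)
  have indepHelper : ∀ (R If : Set (Fin 3 → Fin n)), If ⊆ Ts →
      (∀ x ∈ If, ∀ s ∈ S, s ∉ R → ¬ G.Adj x s) → IsIndep G ((S \ R) ∪ If) := by
    intro R If hIT hnadj a ha b hb hadj
    rcases ha with ⟨haS, haR⟩ | haI
    · rcases hb with ⟨hbS, hbR⟩ | hbI
      · exact hind a haS b hbS hadj
      · exact hnadj b hbI a haS haR hadj.symm
    · rcases hb with ⟨hbS, hbR⟩ | hbI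
      · exact hnadj a haI b hbS hbR hadj
      · exact hindstar a (hIT haI).1 b (hIT hbI).1 hadj
  -- Fact (b): every vertex of T has an S-neighbor
  have hNonempty : ∀ v ∈ Tf, (Nb v).Nonempty := by
    intro v hv
    have hvT : v ∈ Ts := (hTfmem v).mp hv
    by_contra hne
    rw [Finset.not_nonempty_iff_eq_empty] at hne
    apply improve ∅ {v} (Set.empty_subset S)
    · intro x hx
      rw [Set.mem_singleton_iff] at hx
      subst hx
      exact hTsub x ((hTfmem x).mp hv)
    · simp
    · simp
    · apply indepHelper
      · intro x hx; rw [Set.mem_singleton_iff] at hx; subst hx; exact hvT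
      · intro x hx s hs hsR
        rw [Set.mem_singleton_iff] at hx; subst hx
        apply hNbR x hv ∅ _ s hs hsR
        rw [hne]; simp
  -- Fact (d): at most one private neighbor per vertex of S
  have huniq : ∀ u : Fin 3 → Fin n, ∀ v1 ∈ Tf, ∀ v2 ∈ Tf, Nb v1 = {u} → Nb v2 = {u} → v1 = v2 := by
    intro u v1 hv1 v2 hv2 h1 h2
    by_contra hne
    have hu1 : u ∈ Nb v1 := by rw [h1]; exact Finset.mem_singleton_self u
    have huS : u ∈ S := (((hNbmem v1 u).mp hu1).1).1
    apply improve {u} {v1, v2}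
    · rw [Set.singleton_subset_iff]; exact huS
    · intro x hx
      rcases hx with rfl | hx
      · exact hTsub x ((hTfmem x).mp hv1)
      · rw [Set.mem_singleton_iff] at hx; subst hx
        exact hTsub x ((hTfmem x).mp hv2)
    · simp
    · rw [Set.ncard_singleton, Set.ncard_pair hne]; omega
    · apply indepHelper
      · intro x hx
        rcases hx with rfl | hx
        · exact (hTfmem x).mp hv1
        · rw [Set.mem_singleton_iff] at hx; subst hx
          exact (hTfmem x).mp hv2
      · intro x hx s hs hsR
        rcases hx with rfl | hx
        · apply hNbR x hv1 {u} _ s hs hsR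
          rw [h1]; simp
        · rw [Set.mem_singleton_iff] at hx; subst hx
          apply hNbR x hv2 {u} _ s hs hsR
          rw [h2]; simp
  -- Fact (e): no 2-vertex between two private owners
  have hpair : ∀ u1 u2 : Fin 3 → Fin n, u1 ≠ u2 → ∀ v1 ∈ Tf, ∀ v2 ∈ Tf, ∀ v ∈ Tf,
      Nb v1 = {u1} → Nb v2 = {u2} → Nb v = {u1, u2} → False := by
    intro u1 u2 hu12 v1 hv1 v2 hv2 v hv h1 h2 hvv
    have hu1S : u1 ∈ S := by
      have : u1 ∈ Nb v1 := by rw [h1]; exact Finset.mem_singleton_self u1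
      exact (((hNbmem v1 u1).mp this).1).1
    have hu2S : u2 ∈ S := by
      have : u2 ∈ Nb v2 := by rw [h2]; exact Finset.mem_singleton_self u2
      exact (((hNbmem v2 u2).mp this).1).1
    have hne12 : v1 ≠ v2 := by
      intro h; apply hu12
      rw [h, h2] at h1
      exact Finset.singleton_injective h1.symm
    have hnev1 : v ≠ v1 := by
      intro h; rw [h, h1] at hvv
      have : u2 ∈ ({u1} : Finset (Fin 3 → Fin n)) := by rw [hvv]; simp
      rw [Finset.mem_singleton] at this
      exact hu12 this.symm
    have hnev2 : v ≠ v2 := by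
      intro h; rw [h, h2] at hvv
      have : u1 ∈ ({u2} : Finset (Fin 3 → Fin n)) := by rw [hvv]; simp
      rw [Finset.mem_singleton] at this
      exact hu12 this
    apply improve {u1, u2} {v1, v2, v}
    · intro x hx
      rcases hx with rfl | hx
      · exact hu1S
      · rw [Set.mem_singleton_iff] at hx; subst hx; exact hu2S
    · intro x hx
      rcases hx with rfl | hx
      · exact hTsub x ((hTfmem x).mp hv1)
      rcases hx with rfl | hx
      · exact hTsub x ((hTfmem x).mp hv2)
      · rw [Set.mem_singleton_iff] at hx; subst hx
        exact hTsub x ((hTfmem x).mp hv)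
    · rw [Set.ncard_pair hu12]
    · rw [Set.ncard_pair hu12,
        Set.ncard_insert_of_notMem (by simp [hne12, hnev1.symm]) (Set.toFinite _),
        Set.ncard_pair (by exact fun h => hnev2 h.symm)]
      omega
    · apply indepHelper
      · intro x hx
        rcases hx with rfl | hx
        · exact (hTfmem x).mp hv1
        rcases hx with rfl | hx
        · exact (hTfmem x).mp hv2
        · rw [Set.mem_singleton_iff] at hx; subst hx
          exact (hTfmem x).mp hv
      · intro x hx s hs hsR
        rcases hx with rfl | hx
        · apply hNbR x hv1 {u1, u2} _ s hs hsR
          rw [h1]; intro y hy; rw [Finset.coe_singleton, Set.mem_singleton_iff] at hy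
          subst hy; exact Set.mem_insert _ _
        rcases hx with rfl | hx
        · apply hNbR x hv2 {u1, u2} _ s hs hsR
          rw [h2]; intro y hy; rw [Finset.coe_singleton, Set.mem_singleton_iff] at hy
          subst hy; exact Set.mem_insert_of_mem _ rfl
        · rw [Set.mem_singleton_iff] at hx; subst hx
          apply hNbR x hv {u1, u2} _ s hs hsR
          rw [hvv]; intro y hy
          simp only [Finset.coe_insert, Finset.coe_singleton, Set.mem_insert_iff,
            Set.mem_singleton_iff] at hy
          rcases hy with rfl | rfl
          · exact Set.mem_insert _ _
          · exact Set.mem_insert_of_mem _ rfl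
  -- the set of private owners
  set P : Finset (Fin 3 → Fin n) := S'f.filter (fun u => ∃ v ∈ Tf, Nb v = {u}) with hPdef
  -- the charge function
  set c : (Fin 3 → Fin n) → (Fin 3 → Fin n) → ℕ := fun v u => if (Nb v).card = 1 then 30
    else if (Nb v).card = 2 then (if u ∈ P then 12 else 18) else 10 with hcdef
  -- degree bounds
  have hNble : ∀ v : Fin 3 → Fin n, (Nb v).card ≤ 3 := by
    intro v
    apply card_nbhd_le_three hind v (Nb v)
    intro u hu
    obtain ⟨huS', hadj⟩ := (hNbmem v u).mp hu
    exact ⟨huS'.1, hadj⟩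
  have hMle : ∀ u : Fin 3 → Fin n, (Tf.filter (fun v => G.Adj v u)).card ≤ 3 := by
    intro u
    apply card_nbhd_le_three hindstar u (Tf.filter (fun v => G.Adj v u))
    intro v hv
    obtain ⟨hvT, hadj⟩ := Finset.mem_filter.mp hv
    exact ⟨((hTfmem v).mp hvT).1, hadj.symm⟩
  -- the key lower bound: each v ∈ T sends at least 30 units
  have hlow : ∀ v ∈ Tf, 30 ≤ ∑ u ∈ Nb v, c v u := by
    intro v hv
    have h1 : 1 ≤ (Nb v).card := Finset.card_pos.mpr (hNonempty v hv)
    have h3 := hNble v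
    have hcases : (Nb v).card = 1 ∨ (Nb v).card = 2 ∨ (Nb v).card = 3 := by omega
    rcases hcases with h | h | h
    · obtain ⟨u, hu⟩ := Finset.card_eq_one.mp h
      rw [hu, Finset.sum_singleton, hcdef]
      simp only [h, if_pos]
      omega
    · obtain ⟨u1, u2, hne, hu⟩ := Finset.card_eq_two.mp h
      have hnotboth : ¬ (u1 ∈ P ∧ u2 ∈ P) := by
        rintro ⟨hp1, hp2⟩
        obtain ⟨-, v1, hv1, hpriv1⟩ := Finset.mem_filter.mp hp1
        obtain ⟨-, v2, hv2, hpriv2⟩ := Finset.mem_filter.mp hp2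
        exact hpair u1 u2 hne v1 hv1 v2 hv2 v hv hpriv1 hpriv2 hu
      rw [hu, Finset.sum_pair hne, hcdef]
      simp only [h]
      by_cases hp1 : u1 ∈ P <;> by_cases hp2 : u2 ∈ P <;>
        simp [hp1, hp2] at hnotboth ⊢ <;> omega
    · have hconst : ∀ u ∈ Nb v, c v u = 10 := by
        intro u hu
        rw [hcdef]; simp only [h]; norm_num
      rw [Finset.sum_congr rfl hconst, Finset.sum_const, h, smul_eq_mul]
  -- the key upper bound: each u ∈ S' receives at most 54 units
  have hup : ∀ u ∈ S'f, ∑ v ∈ Tf.filter (fun v => G.Adj v u), c v u ≤ 54 := by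
    intro u hu
    set M : Finset (Fin 3 → Fin n) := Tf.filter (fun v => G.Adj v u) with hMdef
    have hMu : ∀ v ∈ M, (Nb v).card = 1 → Nb v = {u} := by
      intro v hvM hc1
      obtain ⟨hvT, hadj⟩ := Finset.mem_filter.mp hvM
      have huNb : u ∈ Nb v := (hNbmem v u).mpr ⟨(hS'fmem u).mp hu, hadj⟩
      obtain ⟨w, hw⟩ := Finset.card_eq_one.mp hc1
      rw [hw] at huNb ⊢
      rw [Finset.mem_singleton] at huNb
      rw [huNb]
    have hM3 : M.card ≤ 3 := hMle u
    by_cases huP : u ∈ P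
    · -- at most one private, each other neighbor gives ≤ 12
      have hsplit := Finset.sum_filter_add_sum_filter_not M
        (fun v => (Nb v).card = 1) (fun v => c v u)
      set M1 := M.filter (fun v => (Nb v).card = 1) with hM1def
      set M2 := M.filter (fun v => ¬ (Nb v).card = 1) with hM2def
      have hM1card : M1.card ≤ 1 := by
        apply Finset.card_le_one.mpr
        intro a ha b hb
        obtain ⟨haM, ha1⟩ := Finset.mem_filter.mp ha
        obtain ⟨hbM, hb1⟩ := Finset.mem_filter.mp hb
        exact huniq u a (Finset.mem_filter.mp haM).1 b (Finset.mem_filter.mp hbM).1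
          (hMu a haM ha1) (hMu b hbM hb1)
      have hsum1 : ∑ v ∈ M1, c v u ≤ 30 * M1.card := by
        apply le_trans (Finset.sum_le_card_nsmul M1 _ 30 ?_) (by rw [smul_eq_mul]; omega)
        intro v hvM1
        have h1 := (Finset.mem_filter.mp hvM1).2
        rw [hcdef]; simp only [h1, if_pos]; omega
      have hsum2 : ∑ v ∈ M2, c v u ≤ 12 * M2.card := by
        apply le_trans (Finset.sum_le_card_nsmul M2 _ 12 ?_) (by rw [smul_eq_mul]; omega)
        intro v hvM2
        have h1 := (Finset.mem_filter.mp hvM2).2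
        rw [hcdef]
        simp only [h1, if_neg]
        by_cases h2 : (Nb v).card = 2 <;> simp [h2, huP]
      have hMcards : M1.card + M2.card = M.card :=
        Finset.card_filter_add_card_filter_not _
      omega
    · -- u has no private neighbor, each neighbor gives ≤ 18
      have hsum : ∑ v ∈ M, c v u ≤ 18 * M.card := by
        apply le_trans (Finset.sum_le_card_nsmul M _ 18 ?_) (by rw [smul_eq_mul]; omega)
        intro v hvM
        have h1 : (Nb v).card ≠ 1 := by
          intro hc1
          apply huP
          rw [hPdef, Finset.mem_filter]
          exact ⟨hu, v, (Finset.mem_filter.mp hvM).1, hMu v hvM hc1⟩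
        rw [hcdef]
        simp only [h1, if_neg]
        by_cases h2 : (Nb v).card = 2 <;> simp [h2, huP]
      omega
  -- double counting
  have hdouble : ∑ v ∈ Tf, ∑ u ∈ Nb v, c v u
      = ∑ u ∈ S'f, ∑ v ∈ Tf.filter (fun v => G.Adj v u), c v u := by
    have lhs : ∀ v : Fin 3 → Fin n, ∑ u ∈ Nb v, c v u
        = ∑ u ∈ S'f, if G.Adj v u then c v u else 0 := by
      intro v; rw [hNbdef]; exact Finset.sum_filter _ _
    have rhs : ∀ u : Fin 3 → Fin n, ∑ v ∈ Tf.filter (fun v => G.Adj v u), c v u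
        = ∑ v ∈ Tf, if G.Adj v u then c v u else 0 := by
      intro u; exact Finset.sum_filter _ _
    simp only [lhs, rhs]
    exact Finset.sum_comm
  -- the main count
  have hmain : 30 * Tf.card ≤ 54 * S'f.card := by
    calc 30 * Tf.card = ∑ _v ∈ Tf, 30 := by rw [Finset.sum_const, smul_eq_mul, mul_comm]
      _ ≤ ∑ v ∈ Tf, ∑ u ∈ Nb v, c v u := Finset.sum_le_sum hlow
      _ = ∑ u ∈ S'f, ∑ v ∈ Tf.filter (fun v => G.Adj v u), c v u := hdouble
      _ ≤ ∑ _u ∈ S'f, 54 := Finset.sum_le_sum hup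
      _ = 54 * S'f.card := by rw [Finset.sum_const, smul_eq_mul, mul_comm]
  -- cardinality bookkeeping
  have hTcard : Ts.ncard = Tf.card := Set.ncard_eq_toFinset_card Ts hfinT
  have hS'card : S's.ncard = S'f.card := Set.ncard_eq_toFinset_card S's hfinS'
  have hSstarSplit : (Sstar ∩ S).ncard + Ts.ncard = Sstar.ncard :=
    Set.ncard_inter_add_ncard_diff_eq_ncard Sstar S (Set.toFinite _)
  have hSSplit : (S ∩ Sstar).ncard + S's.ncard = S.ncard :=
    Set.ncard_inter_add_ncard_diff_eq_ncard S Sstar (Set.toFinite _)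
  have hinter : (Sstar ∩ S).ncard = (S ∩ Sstar).ncard := by rw [Set.inter_comm]
  omega
end

section
/- (Theorem 5, part 3) Let L ⊆ [n]³ be a PLS set and let S be an independent set of G_L that is (p,n²)-maximal for every p ∈ {0, 1, 2, 3}. Then S is a 3/5-approximate solution of the PLSE instance L: for every independent set S* of G_L, 5·|S| ≥ 3·|S*|. -/
open Finset

lemma dist_one_exists {n : ℕ} {v w : Fin 3 → Fin n} (h : hammingDist v w = 1) :
    ∃ d, ∀ e, e ≠ d → v e = w e := by
  classical
  rw [hammingDist, Finset.card_eq_one] at h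
  obtain ⟨d, hd⟩ := h
  refine ⟨d, fun e he => ?_⟩
  by_contra hne
  have : e ∈ ({i | v i ≠ w i} : Finset (Fin 3)) := by simpa using hne
  rw [hd] at this
  exact he (by simpa using this)

lemma dist_le_one_agree {n : ℕ} {v w : Fin 3 → Fin n} (d : Fin 3)
    (h : ∀ e, e ≠ d → v e = w e) : hammingDist v w ≤ 1 := by
  classical
  rw [hammingDist]
  calc ({i | v i ≠ w i} : Finset (Fin 3)).card ≤ ({d} : Finset (Fin 3)).card := by
        apply Finset.card_le_card
        intro e he
        simp only [Finset.mem_singleton]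
        by_contra hne
        exact (by simpa using he : v e ≠ w e) (h e hne)
    _ = 1 := by simp

/-- In a set with pairwise Hamming distance ≠ 1, at most 3 elements can be at
distance 1 from a fixed point `b`. -/
lemma nbrs_card_le_three {n : ℕ} (P : Finset (Fin 3 → Fin n)) (b : Fin 3 → Fin n)
    (hP : ∀ v ∈ P, ∀ w ∈ P, v ≠ w → hammingDist v w ≠ 1)
    (hPb : ∀ v ∈ P, hammingDist v b = 1) : P.card ≤ 3 := by
  classical
  have key : P.card ≤ (Finset.univ : Finset (Fin 3)).card := by
    apply Finset.card_le_card_of_injOn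
      (fun v => if h : hammingDist v b = 1 then Classical.choose (dist_one_exists h) else 0)
    · intro v _; simp
    · intro v hv w hw heq
      have hv1 := hPb v (Finset.mem_coe.mp hv)
      have hw1 := hPb w (Finset.mem_coe.mp hw)
      dsimp only at heq
      rw [dif_pos hv1, dif_pos hw1] at heq
      have hvs := Classical.choose_spec (dist_one_exists hv1)
      have hws := Classical.choose_spec (dist_one_exists hw1)
      set d := Classical.choose (dist_one_exists hv1) with hdd
      rw [← heq] at hws
      by_contra hne
      have hagree : ∀ e, e ≠ d → v e = w e := fun e he => (hvs e he).trans (hws e he).symm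
      have hle := dist_le_one_agree d hagree
      have hpos : 0 < hammingDist v w := hammingDist_pos.mpr hne
      exact hP v (Finset.mem_coe.mp hv) w (Finset.mem_coe.mp hw) hne (by omega)
  simpa using key

lemma double_count {α : Type*} [DecidableEq α] (P Q : Finset α) (r : α → α → Prop)
    [DecidableRel r] :
    ∑ p ∈ P, (Q.filter (r p)).card = ∑ q ∈ Q, (P.filter (fun p => r p q)).card := by
  simp_rw [Finset.card_filter]
  rw [Finset.sum_comm]

/-- Theorem 5, part 3: a 3-maximal solution (i.e. `(p,n²)`-maximal for
every `p ∈ {0,1,2,3}`) is a 3/5-approximate solution of the PLSE instance `L`. -/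
theorem three_maximal_three_fifth_approx (n : ℕ) (hn : 2 ≤ n)
    (L : Set (Fin 3 → Fin n)) (hL : IsPLS L)
    (S : Set (Fin 3 → Fin n)) (hsub : S ⊆ VL L) (hind : IsIndep (GraphL L) S)
    (hmax : ∀ p : ℕ, p ≤ 3 → ∀ R ⊆ S, R.ncard = p → ∀ I ⊆ VL L \ S,
      IsIndep (GraphL L) ((S \ R) ∪ I) → ((S \ R) ∪ I).ncard ≤ S.ncard)
    (Sstar : Set (Fin 3 → Fin n)) (hstar : Sstar ⊆ VL L)
    (hindstar : IsIndep (GraphL L) Sstar) :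
    3 * Sstar.ncard ≤ 5 * S.ncard := by
  classical
  have pairS : ∀ v ∈ S, ∀ w ∈ S, v ≠ w → hammingDist v w ≠ 1 := by
    intro v hv w hw _ h1
    exact hind v hv w hw ⟨hsub hv, hsub hw, h1⟩
  have pairT : ∀ v ∈ Sstar, ∀ w ∈ Sstar, v ≠ w → hammingDist v w ≠ 1 := by
    intro v hv w hw _ h1
    exact hindstar v hv w hw ⟨hstar hv, hstar hw, h1⟩
  have hSfin : S.Finite := Set.toFinite S
  have hTfin : Sstar.Finite := Set.toFinite Sstar
  set SF := hSfin.toFinset with hSFdef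
  set TF := hTfin.toFinset with hTFdef
  have memSF : ∀ v, v ∈ SF ↔ v ∈ S := fun v => Set.Finite.mem_toFinset _
  have memTF : ∀ v, v ∈ TF ↔ v ∈ Sstar := fun v => Set.Finite.mem_toFinset _
  set A := TF \ SF with hAdef
  set B := SF \ TF with hBdef
  have memA : ∀ a ∈ A, a ∈ Sstar ∧ a ∉ S := by
    intro a ha
    rw [hAdef, Finset.mem_sdiff] at ha
    exact ⟨(memTF a).mp ha.1, fun h => ha.2 ((memSF a).mpr h)⟩
  have memB : ∀ b ∈ B, b ∈ S ∧ b ∉ Sstar := by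
    intro b hb
    rw [hBdef, Finset.mem_sdiff] at hb
    exact ⟨(memSF b).mp hb.1, fun h => hb.2 ((memTF b).mpr h)⟩
  set nbr := fun a => B.filter (fun b => hammingDist a b = 1) with hnbrdef
  have nbrsubB : ∀ a, nbr a ⊆ B := fun a => Finset.filter_subset _ _
  have mem_nbr : ∀ a b, b ∈ nbr a ↔ b ∈ B ∧ hammingDist a b = 1 := fun a b => Finset.mem_filter
  -- every S-neighbor of an element of A lies in B, hence in nbr a
  have Snbr : ∀ a ∈ A, ∀ s ∈ S, hammingDist a s = 1 → s ∈ nbr a := by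
    intro a ha s hs h1
    have haS := memA a ha
    refine (mem_nbr a s).mpr ⟨?_, h1⟩
    rw [hBdef, Finset.mem_sdiff, memSF, memTF]
    refine ⟨hs, fun hsT => ?_⟩
    exact pairT a haS.1 s hsT (fun h => haS.2 (h ▸ hs)) h1
  -- the local Hall condition coming from 3-maximality
  have localHall : ∀ R : Finset (Fin 3 → Fin n), ↑R ⊆ S → R.card ≤ 3 →
      ∀ T : Finset (Fin 3 → Fin n), T ⊆ A → (∀ a ∈ T, nbr a ⊆ R) → T.card ≤ R.card := by
    intro R hRS hR3 T hTA hTnbr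
    by_contra hlt
    push_neg at hlt
    obtain ⟨T', hT'T, hT'card⟩ := Finset.exists_subset_card_eq (s := T) (n := R.card + 1) (by omega)
    have hT'A : ∀ a ∈ T', a ∈ Sstar ∧ a ∉ S := fun a ha => memA a (hTA (hT'T ha))
    have hI : (↑T' : Set (Fin 3 → Fin n)) ⊆ VL L \ S := by
      intro a ha
      have h := hT'A a (Finset.mem_coe.mp ha)
      exact ⟨hstar h.1, h.2⟩
    have hindep : IsIndep (GraphL L) ((S \ ↑R) ∪ ↑T') := by
      rintro v hv w hw hadj
      obtain ⟨hvV, hwV, h1⟩ := hadj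
      have hvw : v ≠ w := by
        rintro rfl
        simp [hammingDist_self] at h1
      have mixed : ∀ x y, x ∈ S \ (↑R : Set (Fin 3 → Fin n)) →
          y ∈ (↑T' : Set (Fin 3 → Fin n)) → hammingDist y x = 1 → False := by
        intro x y hx hy h1'
        have hyA : y ∈ A := hTA (hT'T (Finset.mem_coe.mp hy))
        have hxn : x ∈ nbr y := Snbr y hyA x hx.1 h1'
        exact hx.2 (hTnbr y (hT'T (Finset.mem_coe.mp hy)) hxn)
      cases hv with
      | inl hv =>
        cases hw with
        | inl hw => exact pairS v hv.1 w hw.1 hvw h1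
        | inr hw => exact mixed v w hv hw (by rwa [hammingDist_comm])
      | inr hv =>
        cases hw with
        | inl hw => exact mixed w v hw hv h1
        | inr hw =>
          exact pairT v (hT'A v (Finset.mem_coe.mp hv)).1 w (hT'A w (Finset.mem_coe.mp hw)).1 hvw h1
    have hmain := hmax R.card (by omega) ↑R hRS (Set.ncard_coe_finset R) ↑T' hI hindep
    have hdisj : Disjoint (S \ (↑R : Set (Fin 3 → Fin n))) (↑T' : Set (Fin 3 → Fin n)) := by
      rw [Set.disjoint_left]
      intro a ha haT
      exact (hT'A a (Finset.mem_coe.mp haT)).2 ha.1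
    rw [Set.ncard_union_eq hdisj, Set.ncard_diff hRS, Set.ncard_coe_finset,
      Set.ncard_coe_finset] at hmain
    have hRle : R.card ≤ S.ncard := by
      have h := Set.ncard_le_ncard hRS
      rwa [Set.ncard_coe_finset] at h
    omega
  -- degree bounds
  have degA_le : ∀ b, (A.filter fun x => hammingDist x b = 1).card ≤ 3 := by
    intro b
    apply nbrs_card_le_three _ b
    · intro v hv w hw hvw
      rw [Finset.mem_filter] at hv hw
      exact pairT v (memA v hv.1).1 w (memA w hw.1).1 hvw
    · intro v hv
      exact (Finset.mem_filter.mp hv).2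
  have nbr_le : ∀ a, (nbr a).card ≤ 3 := by
    intro a
    apply nbrs_card_le_three _ a
    · intro v hv w hw hvw
      exact pairS v (memB v (nbrsubB a hv)).1 w (memB w (nbrsubB a hw)).1 hvw
    · intro v hv
      rw [hammingDist_comm]
      exact ((mem_nbr a v).mp hv).2
  have nbr_ge : ∀ a ∈ A, 1 ≤ (nbr a).card := by
    intro a ha
    by_contra hcon
    have h0 : nbr a = ∅ := by
      rw [← Finset.card_eq_zero]
      omega
    have h := localHall ∅ (by simp) (by simp) {a} (by simpa using ha)
      (by
        intro x hx
        rw [Finset.mem_singleton] at hx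
        subst hx
        rw [h0])
    simp at h
  -- partition of A by degree
  set A1 := A.filter (fun a => (nbr a).card = 1) with hA1def
  set A2 := A.filter (fun a => (nbr a).card = 2) with hA2def
  set A3 := A.filter (fun a => (nbr a).card = 3) with hA3def
  have hA1A : A1 ⊆ A := Finset.filter_subset _ _
  have hA2A : A2 ⊆ A := Finset.filter_subset _ _
  have hA3A : A3 ⊆ A := Finset.filter_subset _ _
  have hsplit : A = (A1 ∪ A2) ∪ A3 := by
    ext a
    simp only [hA1def, hA2def, hA3def, Finset.mem_union, Finset.mem_filter]
    constructor
    · intro ha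
      have h1 := nbr_ge a ha
      have h3 := nbr_le a
      have : (nbr a).card = 1 ∨ (nbr a).card = 2 ∨ (nbr a).card = 3 := by omega
      tauto
    · tauto
  have hd12 : Disjoint A1 A2 := by
    rw [Finset.disjoint_left]
    intro a ha1 ha2
    rw [hA1def, Finset.mem_filter] at ha1
    rw [hA2def, Finset.mem_filter] at ha2
    omega
  have hd123 : Disjoint (A1 ∪ A2) A3 := by
    rw [Finset.disjoint_left]
    intro a ha12 ha3
    rw [hA3def, Finset.mem_filter] at ha3
    rw [Finset.mem_union, hA1def, hA2def, Finset.mem_filter, Finset.mem_filter] at ha12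
    omega
  have cardsplit : A.card = A1.card + A2.card + A3.card := by
    rw [hsplit, Finset.card_union_of_disjoint hd123, Finset.card_union_of_disjoint hd12]
  have sumsplit : ∑ a ∈ A, (nbr a).card = A1.card * 1 + A2.card * 2 + A3.card * 3 := by
    rw [hsplit, Finset.sum_union hd123, Finset.sum_union hd12]
    have e1 : ∑ a ∈ A1, (nbr a).card = A1.card * 1 := by
      rw [Finset.sum_congr rfl (fun a ha => (Finset.mem_filter.mp ha).2), Finset.sum_const,
        smul_eq_mul]
    have e2 : ∑ a ∈ A2, (nbr a).card = A2.card * 2 := by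
      rw [Finset.sum_congr rfl (fun a ha => (Finset.mem_filter.mp ha).2), Finset.sum_const,
        smul_eq_mul]
    have e3 : ∑ a ∈ A3, (nbr a).card = A3.card * 3 := by
      rw [Finset.sum_congr rfl (fun a ha => (Finset.mem_filter.mp ha).2), Finset.sum_const,
        smul_eq_mul]
    rw [e1, e2, e3]
  have edge_eq : ∑ a ∈ A, (nbr a).card
      = ∑ b ∈ B, (A.filter fun x => hammingDist x b = 1).card :=
    double_count A B (fun a b => hammingDist a b = 1)
  have edge_le : ∑ b ∈ B, (A.filter fun x => hammingDist x b = 1).card ≤ B.card * 3 := by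
    have h := Finset.sum_le_card_nsmul B _ 3 (fun b _ => degA_le b)
    rwa [smul_eq_mul] at h
  -- B1 : targets of the unique neighbors of degree-one vertices
  set B1 := B.filter (fun b => ∃ a ∈ A1, nbr a = {b}) with hB1def
  have hB1B : B1 ⊆ B := Finset.filter_subset _ _
  have hexA1 : ∀ a ∈ A1, ∃ b, nbr a = {b} := fun a ha =>
    Finset.card_eq_one.mp (Finset.mem_filter.mp ha).2
  have hexB1 : ∀ b ∈ B1, ∃ a ∈ A1, nbr a = {b} := fun b hb => (Finset.mem_filter.mp hb).2
  have key1 : ∀ a ∈ A1, ∀ a' ∈ A1, ∀ b, nbr a = {b} → nbr a' = {b} → a = a' := by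
    intro a ha a' ha' b hb hb'
    by_contra hne
    have hbB : b ∈ B := nbrsubB a (by rw [hb]; exact Finset.mem_singleton_self b)
    have h := localHall {b}
      (by
        intro x hx
        rw [Finset.mem_coe, Finset.mem_singleton] at hx
        subst hx
        exact (memB _ hbB).1)
      (by simp) {a, a'}
      (by
        intro x hx
        rw [Finset.mem_insert, Finset.mem_singleton] at hx
        rcases hx with rfl | rfl
        exacts [hA1A ha, hA1A ha'])
      (by
        intro x hx
        rw [Finset.mem_insert, Finset.mem_singleton] at hx
        rcases hx with rfl | rfl
        · rw [hb]
        · rw [hb'])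
    rw [Finset.card_pair hne, Finset.card_singleton] at h
    omega
  have hxB1 : A1.card ≤ B1.card := by
    apply Finset.card_le_card_of_injOn
      (fun a => if h : ∃ b, nbr a = {b} then Classical.choose h else a)
    · intro a ha
      have hex := hexA1 a ha
      dsimp only
      rw [dif_pos hex]
      have hspec := Classical.choose_spec hex
      rw [Finset.mem_coe, hB1def, Finset.mem_filter]
      constructor
      · refine nbrsubB a ?_
        have hms : Classical.choose hex ∈ ({Classical.choose hex} : Finset (Fin 3 → Fin n)) :=
          Finset.mem_singleton_self _
        rwa [← hspec] at hms
      · exact ⟨a, ha, hspec⟩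
    · intro a ha a' ha' heq
      have hex := hexA1 a (Finset.mem_coe.mp ha)
      have hex' := hexA1 a' (Finset.mem_coe.mp ha')
      dsimp only at heq
      rw [dif_pos hex, dif_pos hex'] at heq
      have h2 := Classical.choose_spec hex'
      rw [← heq] at h2
      exact key1 a (Finset.mem_coe.mp ha) a' (Finset.mem_coe.mp ha') _
        (Classical.choose_spec hex) h2
  have hB1card : B1.card ≤ B.card := Finset.card_le_card hB1B
  set C := B \ B1 with hCdef
  have hCB : C ⊆ B := Finset.sdiff_subset
  have hCcard : C.card = B.card - B1.card := Finset.card_sdiff_of_subset hB1B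
  -- each degree-two vertex has at most one neighbor in B1
  have hA2B1 : ∀ a ∈ A2, (nbr a ∩ B1).card ≤ 1 := by
    intro a ha
    have ha2 : (nbr a).card = 2 := (Finset.mem_filter.mp ha).2
    by_contra hcon
    push_neg at hcon
    obtain ⟨b, hb, b', hb', hne⟩ := Finset.one_lt_card.mp hcon
    rw [Finset.mem_inter] at hb hb'
    obtain ⟨ab, hab1, habn⟩ := hexB1 b hb.2
    obtain ⟨ab', hab'1, hab'n⟩ := hexB1 b' hb'.2
    have hanbr : nbr a = {b, b'} := by
      refine (Finset.eq_of_subset_of_card_le ?_ ?_).symm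
      · intro x hx
        rw [Finset.mem_insert, Finset.mem_singleton] at hx
        rcases hx with rfl | rfl
        exacts [hb.1, hb'.1]
      · rw [Finset.card_pair hne]
        omega
    have haab : a ≠ ab := by
      intro h
      have := (Finset.mem_filter.mp hab1).2
      rw [← h] at this
      omega
    have haab' : a ≠ ab' := by
      intro h
      have := (Finset.mem_filter.mp hab'1).2
      rw [← h] at this
      omega
    have habab' : ab ≠ ab' := by
      intro h
      rw [h, hab'n] at habn
      exact hne (Finset.singleton_injective habn).symm
    have h := localHall {b, b'}
      (by
        intro x hx
        rw [Finset.mem_coe, Finset.mem_insert, Finset.mem_singleton] at hx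
        rcases hx with rfl | rfl
        exacts [(memB x (hb.1 |> nbrsubB a)).1, (memB x (hb'.1 |> nbrsubB a)).1])
      (by rw [Finset.card_pair hne]; omega)
      {a, ab, ab'}
      (by
        intro x hx
        rw [Finset.mem_insert, Finset.mem_insert, Finset.mem_singleton] at hx
        rcases hx with rfl | rfl | rfl
        exacts [hA2A ha, hA1A hab1, hA1A hab'1])
      (by
        intro x hx
        rw [Finset.mem_insert, Finset.mem_insert, Finset.mem_singleton] at hx
        rcases hx with rfl | rfl | rfl
        · rw [hanbr]
        · rw [habn]
          intro y hy
          rw [Finset.mem_singleton] at hy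
          subst hy
          exact Finset.mem_insert_self _ _
        · rw [hab'n]
          intro y hy
          rw [Finset.mem_singleton] at hy
          subst hy
          exact Finset.mem_insert_of_mem (Finset.mem_singleton_self _))
    rw [Finset.card_pair hne] at h
    have hT3 : ({a, ab, ab'} : Finset (Fin 3 → Fin n)).card = 3 := by
      rw [Finset.card_insert_of_notMem (by simp [haab, haab']),
        Finset.card_pair habab']
    omega
  -- A2' : degree-two vertices with a neighbor in B1
  set A2' := A2.filter (fun a => (nbr a ∩ B1).Nonempty) with hA2'def
  have hA2'A2 : A2' ⊆ A2 := Finset.filter_subset _ _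
  have interC : ∀ a ∈ A2, (nbr a ∩ C).card + (nbr a ∩ B1).card = 2 := by
    intro a ha
    have ha2 : (nbr a).card = 2 := (Finset.mem_filter.mp ha).2
    have hEq : nbr a ∩ C = nbr a \ B1 := by
      ext x
      simp only [hCdef, Finset.mem_inter, Finset.mem_sdiff]
      constructor
      · rintro ⟨h1, _, h3⟩
        exact ⟨h1, h3⟩
      · rintro ⟨h1, h2⟩
        exact ⟨h1, nbrsubB a h1, h2⟩
    rw [hEq, Finset.card_sdiff_add_card_inter, ha2]
  have hA2'C : ∀ a ∈ A2', (nbr a ∩ C).card = 1 := by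
    intro a ha
    rw [hA2'def, Finset.mem_filter] at ha
    have h1 : 1 ≤ (nbr a ∩ B1).card := Finset.card_pos.mpr ha.2
    have h2 := hA2B1 a ha.1
    have h3 := interC a ha.1
    omega
  have hA2nC : ∀ a ∈ A2, a ∉ A2' → (nbr a ∩ C).card = 2 := by
    intro a ha hna
    have hB10 : (nbr a ∩ B1).card = 0 := by
      rw [Finset.card_eq_zero, ← Finset.not_nonempty_iff_eq_empty]
      intro hne
      exact hna (by rw [hA2'def, Finset.mem_filter]; exact ⟨ha, hne⟩)
    have h3 := interC a ha
    omega
  have filter_eqC : ∀ a, C.filter (fun c => hammingDist a c = 1) = nbr a ∩ C := by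
    intro a
    ext c
    simp only [Finset.mem_filter, Finset.mem_inter, mem_nbr]
    constructor
    · rintro ⟨hc, h1⟩
      exact ⟨⟨hCB hc, h1⟩, hc⟩
    · rintro ⟨⟨_, h1⟩, hc⟩
      exact ⟨hc, h1⟩
  have dc2 : ∑ a ∈ A2, (nbr a ∩ C).card
      = ∑ c ∈ C, (A2.filter (fun x => hammingDist x c = 1)).card := by
    calc ∑ a ∈ A2, (nbr a ∩ C).card
        = ∑ a ∈ A2, (C.filter (fun c => hammingDist a c = 1)).card :=
          Finset.sum_congr rfl (fun a _ => by rw [filter_eqC a])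
      _ = _ := double_count A2 C (fun a c => hammingDist a c = 1)
  have dc2' : ∑ a ∈ A2', (nbr a ∩ C).card
      = ∑ c ∈ C, (A2'.filter (fun x => hammingDist x c = 1)).card := by
    calc ∑ a ∈ A2', (nbr a ∩ C).card
        = ∑ a ∈ A2', (C.filter (fun c => hammingDist a c = 1)).card :=
          Finset.sum_congr rfl (fun a _ => by rw [filter_eqC a])
      _ = _ := double_count A2' C (fun a c => hammingDist a c = 1)
  -- at most one element of A2' neighbors a given c ∈ C
  have fbound : ∀ c ∈ C, (A2'.filter (fun x => hammingDist x c = 1)).card ≤ 1 := by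
    intro c hc
    by_contra hcon
    push_neg at hcon
    obtain ⟨a, haf, a', haf', hne⟩ := Finset.one_lt_card.mp hcon
    rw [Finset.mem_filter] at haf haf'
    obtain ⟨ha2'mem, hac⟩ := haf
    obtain ⟨ha2'mem', hac'⟩ := haf'
    rw [hA2'def, Finset.mem_filter] at ha2'mem ha2'mem'
    obtain ⟨ha2, hne1⟩ := ha2'mem
    obtain ⟨ha2b, hne1'⟩ := ha2'mem'
    have hcard2 : (nbr a).card = 2 := (Finset.mem_filter.mp ha2).2
    have hcard2' : (nbr a').card = 2 := (Finset.mem_filter.mp ha2b).2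
    obtain ⟨b, hb⟩ := hne1
    obtain ⟨b', hb'⟩ := hne1'
    rw [Finset.mem_inter] at hb hb'
    have hcB : c ∈ B := hCB hc
    have hcnbr : c ∈ nbr a := (mem_nbr a c).mpr ⟨hcB, hac⟩
    have hcnbr' : c ∈ nbr a' := (mem_nbr a' c).mpr ⟨hcB, hac'⟩
    have hcb : c ≠ b := by
      intro h
      rw [hCdef, Finset.mem_sdiff] at hc
      exact hc.2 (h ▸ hb.2)
    have hcb' : c ≠ b' := by
      intro h
      rw [hCdef, Finset.mem_sdiff] at hc
      exact hc.2 (h ▸ hb'.2)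
    have hanbr : nbr a = {c, b} := by
      refine (Finset.eq_of_subset_of_card_le ?_ ?_).symm
      · intro x hx
        rw [Finset.mem_insert, Finset.mem_singleton] at hx
        rcases hx with rfl | rfl
        exacts [hcnbr, hb.1]
      · rw [Finset.card_pair hcb]
        omega
    have hanbr' : nbr a' = {c, b'} := by
      refine (Finset.eq_of_subset_of_card_le ?_ ?_).symm
      · intro x hx
        rw [Finset.mem_insert, Finset.mem_singleton] at hx
        rcases hx with rfl | rfl
        exacts [hcnbr', hb'.1]
      · rw [Finset.card_pair hcb']
        omega
    obtain ⟨ab, hab1, habn⟩ := hexB1 b hb.2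
    obtain ⟨ab', hab'1, hab'n⟩ := hexB1 b' hb'.2
    have hcard1 : (nbr ab).card = 1 := by rw [habn]; simp
    have hcard1' : (nbr ab').card = 1 := by rw [hab'n]; simp
    have haab : a ≠ ab := by
      intro h
      rw [h] at hcard2
      omega
    have haab' : a ≠ ab' := by
      intro h
      rw [h] at hcard2
      omega
    have ha'ab : a' ≠ ab := by
      intro h
      rw [h] at hcard2'
      omega
    have ha'ab' : a' ≠ ab' := by
      intro h
      rw [h] at hcard2'
      omega
    have hbB : b ∈ B := hB1B hb.2
    have hb'B : b' ∈ B := hB1B hb'.2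
    by_cases hbb' : b = b'
    · subst hbb'
      have h := localHall {c, b}
        (by
          intro x hx
          rw [Finset.mem_coe, Finset.mem_insert, Finset.mem_singleton] at hx
          rcases hx with rfl | rfl
          exacts [(memB _ hcB).1, (memB _ hbB).1])
        (by rw [Finset.card_pair hcb]; omega)
        {a, a', ab}
        (by
          intro x hx
          rw [Finset.mem_insert, Finset.mem_insert, Finset.mem_singleton] at hx
          rcases hx with rfl | rfl | rfl
          exacts [hA2A ha2, hA2A ha2b, hA1A hab1])
        (by
          intro x hx
          rw [Finset.mem_insert, Finset.mem_insert, Finset.mem_singleton] at hx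
          rcases hx with rfl | rfl | rfl
          · rw [hanbr]
          · rw [hanbr']
          · rw [habn]
            intro y hy
            rw [Finset.mem_singleton] at hy
            subst hy
            exact Finset.mem_insert_of_mem (Finset.mem_singleton_self _))
      rw [Finset.card_pair hcb] at h
      have hT3 : ({a, a', ab} : Finset (Fin 3 → Fin n)).card = 3 := by
        rw [Finset.card_insert_of_notMem (by simp [hne, haab]), Finset.card_pair ha'ab]
      omega
    · have habab' : ab ≠ ab' := by
        intro h
        rw [h, hab'n] at habn
        exact hbb' (Finset.singleton_injective habn.symm)
      have hR3 : ({c, b, b'} : Finset (Fin 3 → Fin n)).card = 3 := by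
        rw [Finset.card_insert_of_notMem (by simp [hcb, hcb']), Finset.card_pair hbb']
      have hT4 : ({a, a', ab, ab'} : Finset (Fin 3 → Fin n)).card = 4 := by
        rw [Finset.card_insert_of_notMem (by simp [hne, haab, haab']),
          Finset.card_insert_of_notMem (by simp [ha'ab, ha'ab']),
          Finset.card_pair habab']
      have h := localHall {c, b, b'}
        (by
          intro x hx
          rw [Finset.mem_coe, Finset.mem_insert, Finset.mem_insert,
            Finset.mem_singleton] at hx
          rcases hx with rfl | rfl | rfl
          exacts [(memB _ hcB).1, (memB _ hbB).1, (memB _ hb'B).1])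
        (by rw [hR3])
        {a, a', ab, ab'}
        (by
          intro x hx
          rw [Finset.mem_insert, Finset.mem_insert, Finset.mem_insert,
            Finset.mem_singleton] at hx
          rcases hx with rfl | rfl | rfl | rfl
          exacts [hA2A ha2, hA2A ha2b, hA1A hab1, hA1A hab'1])
        (by
          intro x hx
          rw [Finset.mem_insert, Finset.mem_insert, Finset.mem_insert,
            Finset.mem_singleton] at hx
          rcases hx with rfl | rfl | rfl | rfl
          · rw [hanbr]
            intro y hy
            rw [Finset.mem_insert, Finset.mem_singleton] at hy
            rcases hy with rfl | rfl
            · exact Finset.mem_insert_self _ _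
            · exact Finset.mem_insert_of_mem (Finset.mem_insert_self _ _)
          · rw [hanbr']
            intro y hy
            rw [Finset.mem_insert, Finset.mem_singleton] at hy
            rcases hy with rfl | rfl
            · exact Finset.mem_insert_self _ _
            · exact Finset.mem_insert_of_mem
                (Finset.mem_insert_of_mem (Finset.mem_singleton_self _))
          · rw [habn]
            intro y hy
            rw [Finset.mem_singleton] at hy
            subst hy
            exact Finset.mem_insert_of_mem (Finset.mem_insert_self _ _)
          · rw [hab'n]
            intro y hy
            rw [Finset.mem_singleton] at hy
            subst hy
            exact Finset.mem_insert_of_mem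
              (Finset.mem_insert_of_mem (Finset.mem_singleton_self _)))
      rw [hR3, hT4] at h
      omega
  have dbound : ∀ c ∈ C, (A2.filter (fun x => hammingDist x c = 1)).card ≤ 3 := by
    intro c _
    refine le_trans (Finset.card_le_card ?_) (degA_le c)
    exact Finset.filter_subset_filter _ hA2A
  have sum4 : ∑ c ∈ C, ((A2.filter (fun x => hammingDist x c = 1)).card
      + (A2'.filter (fun x => hammingDist x c = 1)).card) ≤ C.card * 4 := by
    have h := Finset.sum_le_card_nsmul C
      (fun c => (A2.filter (fun x => hammingDist x c = 1)).card
        + (A2'.filter (fun x => hammingDist x c = 1)).card) 4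
      (fun c hc => by
        have h1 := dbound c hc
        have h2 := fbound c hc
        omega)
    rwa [smul_eq_mul] at h
  have vA2' : ∑ a ∈ A2', (nbr a ∩ C).card = A2'.card := by
    rw [Finset.sum_congr rfl hA2'C, Finset.sum_const, smul_eq_mul, mul_one]
  have vA2 : ∑ a ∈ A2, (nbr a ∩ C).card + A2'.card = 2 * A2.card := by
    have hsplitsum := Finset.sum_filter_add_sum_filter_not A2
      (fun a => (nbr a ∩ B1).Nonempty) (fun a => (nbr a ∩ C).card)
    have hfilt : A2.filter (fun a => (nbr a ∩ B1).Nonempty) = A2' := by rw [hA2'def]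
    have hnotsum : ∑ a ∈ A2.filter (fun a => ¬ (nbr a ∩ B1).Nonempty), (nbr a ∩ C).card
        = 2 * (A2.filter (fun a => ¬ (nbr a ∩ B1).Nonempty)).card := by
      calc ∑ a ∈ A2.filter (fun a => ¬ (nbr a ∩ B1).Nonempty), (nbr a ∩ C).card
          = ∑ _a ∈ A2.filter (fun a => ¬ (nbr a ∩ B1).Nonempty), 2 :=
            Finset.sum_congr rfl (fun a ha => by
              rw [Finset.mem_filter] at ha
              exact hA2nC a ha.1 (by rw [hA2'def, Finset.mem_filter]; tauto))
        _ = 2 * (A2.filter (fun a => ¬ (nbr a ∩ B1).Nonempty)).card := by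
            rw [Finset.sum_const, smul_eq_mul, mul_comm]
    have hcards := Finset.card_filter_add_card_filter_not
      (s := A2) (p := fun a => (nbr a ∩ B1).Nonempty)
    rw [hfilt] at hsplitsum hcards
    rw [← hsplitsum, vA2', hnotsum]
    omega
  have y2 : 2 * A2.card ≤ C.card * 4 := by
    calc 2 * A2.card = ∑ a ∈ A2, (nbr a ∩ C).card + ∑ a ∈ A2', (nbr a ∩ C).card := by
          rw [vA2']
          exact vA2.symm
      _ = ∑ c ∈ C, ((A2.filter (fun x => hammingDist x c = 1)).card
            + (A2'.filter (fun x => hammingDist x c = 1)).card) := by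
          rw [dc2, dc2', Finset.sum_add_distrib]
      _ ≤ C.card * 4 := sum4
  -- final assembly
  have e_tot : A1.card * 1 + A2.card * 2 + A3.card * 3 ≤ B.card * 3 := by
    rw [← sumsplit, edge_eq]
    exact edge_le
  have hS : S.ncard = SF.card := Set.ncard_eq_toFinset_card S hSfin
  have hT : Sstar.ncard = TF.card := Set.ncard_eq_toFinset_card Sstar hTfin
  have h1 : A.card + (TF ∩ SF).card = TF.card := Finset.card_sdiff_add_card_inter TF SF
  have h2 : B.card + (SF ∩ TF).card = SF.card := Finset.card_sdiff_add_card_inter SF TF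
  have h3 : (TF ∩ SF).card = (SF ∩ TF).card := by rw [Finset.inter_comm]
  rw [hS, hT]
  omega
end

section
/- Trellis-swap generalizes (1,n²)-swap and (2,n²)-swap: let S be an independent set of G_L that is maximal and (1,n²)-maximal, and suppose S is Trellis-maximal, i.e., for every d ∈ {1,2,3} and k ∈ [n], with R = S ∩ Φ_{d,k}, F₁ = {v ∈ V_L \ S : |N(v) ∩ S| = 1 and N(v) ∩ S ⊆ R}, and F₂ = {v ∈ V_L \ S : |N(v) ∩ S| = 2 and N(v) ∩ S ⊆ R}, there is no independent set I ⊆ R ∪ F₁ ∪ F₂ of G_L with |S \ R| + |I| > |S|. Then S is (2,n²)-maximal: there is no R' ⊆ S with |R'| = 2 and I' ⊆ V_L \ S such that (S \ R') ∪ I' is independent and |(S \ R') ∪ I'| > |S|. -/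
/-- Trellis-swap generalizes `(2,n²)`-swap: a maximal, `(1,n²)`-maximal
and Trellis-maximal independent set of `G_L` is `(2,n²)`-maximal. -/
theorem trellis_maximal_implies_two_maximal (n : ℕ) (hn : 2 ≤ n)
    (L : Set (Fin 3 → Fin n)) (hL : IsPLS L)
    (S : Set (Fin 3 → Fin n)) (hsub : S ⊆ VL L) (hind : IsIndep (GraphL L) S)
    (hmax0 : ∀ v ∈ VL L \ S, ((GraphL L).neighborSet v ∩ S).Nonempty)
    (hmax1 : ∀ R ⊆ S, R.ncard = 1 → ∀ I ⊆ VL L \ S,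
      IsIndep (GraphL L) ((S \ R) ∪ I) → ((S \ R) ∪ I).ncard ≤ S.ncard)
    (htrellis : ∀ (d : Fin 3) (k : Fin n),
      ∀ I ⊆ (S ∩ {w : Fin 3 → Fin n | w d = k}) ∪
          {w | w ∈ VL L \ S ∧ ((GraphL L).neighborSet w ∩ S).ncard = 1 ∧
            (GraphL L).neighborSet w ∩ S ⊆ S ∩ {w' : Fin 3 → Fin n | w' d = k}} ∪
          {w | w ∈ VL L \ S ∧ ((GraphL L).neighborSet w ∩ S).ncard = 2 ∧
            (GraphL L).neighborSet w ∩ S ⊆ S ∩ {w' : Fin 3 → Fin n | w' d = k}},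
        IsIndep (GraphL L) I →
        (S \ (S ∩ {w : Fin 3 → Fin n | w d = k})).ncard + I.ncard ≤ S.ncard) :
    ∀ R' ⊆ S, R'.ncard = 2 → ∀ I' ⊆ VL L \ S,
      IsIndep (GraphL L) ((S \ R') ∪ I') → ((S \ R') ∪ I').ncard ≤ S.ncard := by
  classical
  intro R' hR'S hR'2 I' hI' hindI
  -- I' is disjoint from S
  have hI'S : ∀ v ∈ I', v ∉ S := fun v hv => (hI' hv).2
  -- it suffices to show I'.ncard ≤ 2
  suffices hle : I'.ncard ≤ 2 by
    calc ((S \ R') ∪ I').ncard ≤ (S \ R').ncard + I'.ncard := Set.ncard_union_le _ _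
      _ ≤ (S \ R').ncard + R'.ncard := by omega
      _ = S.ncard := Set.ncard_diff_add_ncard_of_subset hR'S (Set.toFinite S)
  obtain ⟨r₁, r₂, hr12, hR'eq⟩ := Set.ncard_eq_two.mp hR'2
  have hr₁S : r₁ ∈ S := hR'S (by rw [hR'eq]; left; rfl)
  have hr₂S : r₂ ∈ S := hR'S (by rw [hR'eq]; right; rfl)
  -- every v ∈ I' has its S-neighborhood nonempty and inside R'
  have hNsub : ∀ v ∈ I', (GraphL L).neighborSet v ∩ S ⊆ R' := by
    intro v hv w ⟨hadj, hwS⟩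
    by_contra hwR
    exact hindI v (Or.inr hv) w (Or.inl ⟨hwS, hwR⟩) hadj
  have hNne : ∀ v ∈ I', ((GraphL L).neighborSet v ∩ S).Nonempty := fun v hv => hmax0 v (hI' hv)
  by_cases hshare : ∃ d, r₁ d = r₂ d
  · -- Case A: r₁ and r₂ share a coordinate; use the trellis hypothesis on that facet
    obtain ⟨d, hd⟩ := hshare
    set k := r₁ d with hk
    set R : Set (Fin 3 → Fin n) := S ∩ {w | w d = k} with hR
    have hR'R : R' ⊆ R := by
      rw [hR'eq]
      rintro x (rfl | rfl)
      · exact ⟨hr₁S, rfl⟩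
      · exact ⟨hr₂S, hd.symm⟩
    have hRS : R ⊆ S := Set.inter_subset_left
    set I : Set (Fin 3 → Fin n) := I' ∪ (R \ R') with hI
    have hIsub : I ⊆ (S ∩ {w : Fin 3 → Fin n | w d = k}) ∪
          {w | w ∈ VL L \ S ∧ ((GraphL L).neighborSet w ∩ S).ncard = 1 ∧
            (GraphL L).neighborSet w ∩ S ⊆ S ∩ {w' : Fin 3 → Fin n | w' d = k}} ∪
          {w | w ∈ VL L \ S ∧ ((GraphL L).neighborSet w ∩ S).ncard = 2 ∧
            (GraphL L).neighborSet w ∩ S ⊆ S ∩ {w' : Fin 3 → Fin n | w' d = k}} := by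
      rintro v (hv | hv)
      · -- v ∈ I'
        have hsubR' : (GraphL L).neighborSet v ∩ S ⊆ R := (hNsub v hv).trans hR'R
        have h1 : 1 ≤ ((GraphL L).neighborSet v ∩ S).ncard :=
          (Set.ncard_pos (Set.toFinite _)).mpr (hNne v hv)
        have h2 : ((GraphL L).neighborSet v ∩ S).ncard ≤ 2 := by
          have := Set.ncard_le_ncard (hNsub v hv) (Set.toFinite _)
          omega
        rcases (by omega : ((GraphL L).neighborSet v ∩ S).ncard = 1 ∨
            ((GraphL L).neighborSet v ∩ S).ncard = 2) with h | h
        · exact Or.inl (Or.inr ⟨hI' hv, h, hsubR'⟩)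
        · exact Or.inr ⟨hI' hv, h, hsubR'⟩
      · exact Or.inl (Or.inl hv.1)
    have hIind : IsIndep (GraphL L) I := by
      have hsub2 : I ⊆ (S \ R') ∪ I' := by
        rintro v (hv | hv)
        · exact Or.inr hv
        · exact Or.inl ⟨hRS hv.1, hv.2⟩
      intro v hv w hw
      exact hindI v (hsub2 hv) w (hsub2 hw)
    have htr := htrellis d k I hIsub hIind
    -- cardinality bookkeeping
    have e1 : I.ncard = I'.ncard + (R \ R').ncard := by
      rw [hI, Set.ncard_union_eq]
      exact Set.disjoint_left.mpr fun a ha hb => hI'S a ha (hRS hb.1)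
    have e2 : (S \ R').ncard = (S \ R).ncard + (R \ R').ncard := by
      have : S \ R' = (S \ R) ∪ (R \ R') := by
        ext x
        constructor
        · rintro ⟨hxS, hxR'⟩
          by_cases hxR : x ∈ R
          · exact Or.inr ⟨hxR, hxR'⟩
          · exact Or.inl ⟨hxS, hxR⟩
        · rintro (⟨hxS, hxR⟩ | ⟨hxR, hxR'⟩)
          · exact ⟨hxS, fun h => hxR (hR'R h)⟩
          · exact ⟨hRS hxR, hxR'⟩
      rw [this, Set.ncard_union_eq]
      exact Set.disjoint_left.mpr fun a ha hb => ha.2 hb.1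
    have e3 : (S \ R').ncard + R'.ncard = S.ncard :=
      Set.ncard_diff_add_ncard_of_subset hR'S (Set.toFinite S)
    rw [← hR] at htr
    omega
  · -- Case B: r₁ and r₂ differ in every coordinate
    push_neg at hshare
    have hdist3 : hammingDist r₁ r₂ = 3 := by
      simp [hammingDist, hshare]
    -- every v ∈ I' is adjacent to r₁ or r₂, but not both
    -- key claim: for each a,b with {a,b} a relabeling of {r₁,r₂},
    -- at most one element of I' is adjacent to a
    have claim : ∀ a b : Fin 3 → Fin n, a ∈ R' → b ∈ R' → hammingDist a b = 3 →
        ({v ∈ I' | (GraphL L).Adj v a}).ncard ≤ 1 := by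
      intro a b haR hbR hab
      have haS : a ∈ S := hR'S haR
      set J : Set (Fin 3 → Fin n) := {v ∈ I' | (GraphL L).Adj v a} with hJ
      have hJI' : J ⊆ I' := fun v hv => hv.1
      -- no v ∈ J is adjacent to any element of S \ {a}
      have hkey : ∀ v ∈ J, ∀ w ∈ S \ ({a} : Set (Fin 3 → Fin n)), ¬ (GraphL L).Adj v w := by
        rintro v hv w ⟨hwS, hwa⟩ hadj
        have hwR' : w ∈ R' := hNsub v hv.1 ⟨hadj, hwS⟩
        have hwb : w = b := by
          rw [hR'eq] at hwR' haR hbR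
          rcases haR with rfl | rfl <;> rcases hbR with rfl | rfl <;>
            rcases hwR' with rfl | rfl <;> first | rfl | simp_all
        have h1 : hammingDist v a = 1 := hv.2.2.2
        have h2 : hammingDist v b = 1 := hwb ▸ hadj.2.2
        have := hammingDist_triangle a v b
        rw [hammingDist_comm a v] at this
        omega
      have hindJ : IsIndep (GraphL L) ((S \ ({a} : Set (Fin 3 → Fin n))) ∪ J) := by
        rintro v (hv | hv) w (hw | hw)
        · exact hind v hv.1 w hw.1
        · intro hadj; exact hkey w hw v hv ((GraphL L).adj_symm hadj)
        · exact hkey v hv w hw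
        · exact hindI v (Or.inr (hJI' hv)) w (Or.inr (hJI' hw))
      have hm := hmax1 {a} (Set.singleton_subset_iff.mpr haS) (Set.ncard_singleton a)
        J (fun v hv => hI' (hJI' hv)) hindJ
      have e1 : ((S \ ({a} : Set (Fin 3 → Fin n))) ∪ J).ncard
          = (S \ ({a} : Set (Fin 3 → Fin n))).ncard + J.ncard := by
        exact Set.ncard_union_eq
          (Set.disjoint_left.mpr fun x hx hxJ => hI'S x (hJI' hxJ) hx.1)
          (Set.toFinite _) (Set.toFinite _)
      have e2 : (S \ ({a} : Set (Fin 3 → Fin n))).ncard + 1 = S.ncard := by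
        have := Set.ncard_diff_add_ncard_of_subset
          (Set.singleton_subset_iff.mpr haS) (Set.toFinite S)
        rwa [Set.ncard_singleton] at this
      omega
    have h1 := claim r₁ r₂ (by rw [hR'eq]; left; rfl) (by rw [hR'eq]; right; rfl) hdist3
    have h2 := claim r₂ r₁ (by rw [hR'eq]; right; rfl) (by rw [hR'eq]; left; rfl)
      (by rwa [hammingDist_comm])
    have hcover : I' ⊆ {v ∈ I' | (GraphL L).Adj v r₁} ∪ {v ∈ I' | (GraphL L).Adj v r₂} := by
      intro v hv
      obtain ⟨w, hadj, hwS⟩ := hNne v hv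
      have hwR' : w ∈ R' := hNsub v hv ⟨hadj, hwS⟩
      rw [hR'eq] at hwR'
      rcases hwR' with rfl | rfl
      · exact Or.inl ⟨hv, hadj⟩
      · exact Or.inr ⟨hv, hadj⟩
    calc I'.ncard ≤ ({v ∈ I' | (GraphL L).Adj v r₁} ∪ {v ∈ I' | (GraphL L).Adj v r₂}).ncard :=
        Set.ncard_le_ncard hcover (Set.toFinite _)
      _ ≤ ({v ∈ I' | (GraphL L).Adj v r₁}).ncard + ({v ∈ I' | (GraphL L).Adj v r₂}).ncard :=
        Set.ncard_union_le _ _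
      _ ≤ 2 := by omega
end
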